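/- arXiv:2404.05166 — 3 statements merged into one kernel-verified Lean document; each statement's English description precedes it below -/
import Mathlib

section
/- Let T > 0, let A, B, C, D, Q, R, Γ : ℝ → ℝ be continuous on [0,T], let H, Γ₀ ∈ ℝ, and fix ε > 0, M ≥ 0. Suppose P : ℝ → ℝ is differentiable on [0,T], satisfies P(T) = H, |R(t) + P(t)D(t)²| ≥ ε on [0,T] and P'(t) + 2A(t)P(t) + C(t)²P(t) − (R(t) + P(t)D(t)²)⁻¹·(B(t)P(t) + P(t)C(t)D(t))² + Q(t) = 0 on [0,T]. Then there exists a constant c ≥ 0 such that for every natural number N ≥ 1 and every pair of functions P_N, K_N : ℝ → ℝ differentiable on [0,T] with P_N(T) = H·(1 − Γ₀/N), |P_N(t)| ≤ M, |K_N(t)| ≤ M, |α_N(t)| ≥ ε on [0,T], where α_N := R + (P_N + K_N/N)D² and β_N := B·P_N + (P_N + K_N/N)·C·D, satisfying P_N'(t) + 2A(t)P_N(t) − P_N(t)B(t)α_N(t)⁻¹β_N(t) + C(t)(P_N(t) + K_N(t)/N)(C(t) − D(t)α_N(t)⁻¹β_N(t)) + (1 − Γ(t)/N)Q(t) = 0 on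 [0,T], one has sup_{t ∈ [0,T]} |P_N(t) − P(t)| ≤ c/N. -/
open Set

open Real in
lemma riccati_identity (a b c d q r γ p pn u n : ℝ) (hn : n ≠ 0)
    (hα0 : r + p * d ^ 2 ≠ 0) (hαN0 : r + (pn + u) * d ^ 2 ≠ 0) :
    (2 * a * pn - pn * b * (r + (pn + u) * d ^ 2)⁻¹ * (b * pn + (pn + u) * c * d)
        + c * (pn + u) * (c - d * (r + (pn + u) * d ^ 2)⁻¹ * (b * pn + (pn + u) * c * d))
        + (1 - γ / n) * q)
      - (2 * a * p + c ^ 2 * p - (r + p * d ^ 2)⁻¹ * (b * p + p * c * d) ^ 2 + q)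
    = 2 * a * (pn - p) + c ^ 2 * (pn - p)
      - ((r + p * d ^ 2) * (b * pn + (pn + u) * c * d) ^ 2
          - (r + (pn + u) * d ^ 2) * (b * p + p * c * d) ^ 2)
        / ((r + p * d ^ 2) * (r + (pn + u) * d ^ 2))
      + (c ^ 2 * u - γ * q / n) := by
  rw [div_eq_mul_inv _ ((r + p * d ^ 2) * (r + (pn + u) * d ^ 2)), mul_inv, div_eq_mul_inv, div_eq_mul_inv]
  generalize hX : (r + p * d ^ 2)⁻¹ = X
  generalize hY : (r + (pn + u) * d ^ 2)⁻¹ = Y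
  have hx : (r + p * d ^ 2) * X = 1 := by rw [← hX]; exact mul_inv_cancel₀ hα0
  have hy : (r + (pn + u) * d ^ 2) * Y = 1 := by rw [← hY]; exact mul_inv_cancel₀ hαN0
  linear_combination ((b * pn + (pn + u) * c * d) ^ 2 * Y) * hx - ((b * p + p * c * d) ^ 2 * X) * hy

set_option maxHeartbeats 1600000 in
lemma riccati_diff_bound (K ε : ℝ) (hK : 1 ≤ K) (hε : 0 < ε)
    (a b c d q r γ p pn kn n : ℝ) (hn : 1 ≤ n)
    (ha : |a| ≤ K) (hb : |b| ≤ K) (hc : |c| ≤ K) (hd : |d| ≤ K)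
    (hq : |q| ≤ K) (hr : |r| ≤ K) (hγ : |γ| ≤ K) (hp : |p| ≤ K)
    (hpn : |pn| ≤ K) (hkn : |kn| ≤ K)
    (hα : ε ≤ |r + p * d ^ 2|) (hαN : ε ≤ |r + (pn + kn / n) * d ^ 2|) :
    |(2 * a * pn - pn * b * (r + (pn + kn / n) * d ^ 2)⁻¹ * (b * pn + (pn + kn / n) * c * d)
        + c * (pn + kn / n) * (c - d * (r + (pn + kn / n) * d ^ 2)⁻¹
            * (b * pn + (pn + kn / n) * c * d))
        + (1 - γ / n) * q)
      - (2 * a * p + c ^ 2 * p - (r + p * d ^ 2)⁻¹ * (b * p + p * c * d) ^ 2 + q)|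
    ≤ (3 * K ^ 2 + 24 * K ^ 8 / ε ^ 2) * |pn - p| + (2 * K ^ 3 + 14 * K ^ 9 / ε ^ 2) / n := by
  have hK0 : (0:ℝ) < K := lt_of_lt_of_le one_pos hK
  have hn0 : (0:ℝ) < n := lt_of_lt_of_le one_pos hn
  set α := r + p * d ^ 2 with hαdef
  set αN := r + (pn + kn / n) * d ^ 2 with hαNdef
  set β := b * p + p * c * d with hβdef
  set βN := b * pn + (pn + kn / n) * c * d with hβNdef
  set e := pn - p with hedef
  clear_value α αN β βN e
  have hα0 : α ≠ 0 := by
    intro h; rw [h] at hα; simp at hα; linarith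
  have hαN0 : αN ≠ 0 := by
    intro h; rw [h] at hαN; simp at hαN; linarith
  -- bounds on pieces
  have hkn' : |kn / n| ≤ K := by
    rw [abs_div, abs_of_pos hn0]
    calc |kn| / n ≤ |kn| / 1 := by gcongr
    _ = |kn| := by ring
    _ ≤ K := hkn
  have hsum : |pn + kn / n| ≤ 2 * K := by
    calc |pn + kn / n| ≤ |pn| + |kn / n| := abs_add_le _ _
    _ ≤ K + K := add_le_add hpn hkn'
    _ = 2 * K := by ring
  have hd2 : |d ^ 2| ≤ K ^ 2 := by
    rw [abs_pow]; exact pow_le_pow_left₀ (abs_nonneg d) hd 2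
  have hαb : |α| ≤ 2 * K ^ 3 := by
    rw [hαdef]
    calc |r + p * d ^ 2| ≤ |r| + |p * d ^ 2| := abs_add_le _ _
    _ ≤ K + K * K ^ 2 := by
        rw [abs_mul]; exact add_le_add hr (mul_le_mul hp hd2 (abs_nonneg _) (le_of_lt hK0))
    _ ≤ 2 * K ^ 3 := by nlinarith
  have hβb : |β| ≤ 2 * K ^ 3 := by
    rw [hβdef]
    calc |b * p + p * c * d| ≤ |b * p| + |p * c * d| := abs_add_le _ _
    _ ≤ K * K + K * K * K := by
        rw [abs_mul, abs_mul, abs_mul]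
        exact add_le_add (mul_le_mul hb hp (abs_nonneg _) (le_of_lt hK0))
          (mul_le_mul (mul_le_mul hp hc (abs_nonneg _) (le_of_lt hK0)) hd (abs_nonneg _)
            (by positivity))
    _ ≤ 2 * K ^ 3 := by nlinarith
  have hβNb : |βN| ≤ 3 * K ^ 3 := by
    rw [hβNdef]
    calc |b * pn + (pn + kn / n) * c * d| ≤ |b * pn| + |(pn + kn / n) * c * d| := abs_add_le _ _
    _ ≤ K * K + 2 * K * K * K := by
        rw [abs_mul, abs_mul, abs_mul]
        exact add_le_add (mul_le_mul hb hpn (abs_nonneg _) (le_of_lt hK0))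
          (mul_le_mul (mul_le_mul hsum hc (abs_nonneg _) (by positivity)) hd (abs_nonneg _)
            (by positivity))
    _ ≤ 3 * K ^ 3 := by nlinarith
  have hβdiff : |βN - β| ≤ 2 * K ^ 2 * |e| + K ^ 3 / n := by
    have hid : βN - β = b * e + c * d * e + kn / n * (c * d) := by
      rw [hβNdef, hβdef, hedef]; ring
    rw [hid]
    have e1 : |b * e| ≤ K * |e| := by
      rw [abs_mul]; gcongr
    have e2 : |c * d * e| ≤ K * K * |e| := by
      rw [abs_mul, abs_mul]; gcongr
    have e3 : |kn / n * (c * d)| ≤ |kn| / n * (K * K) := by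
      rw [abs_mul, abs_mul, abs_div, abs_of_pos hn0]; gcongr
    calc |b * e + c * d * e + kn / n * (c * d)|
        ≤ |b * e + c * d * e| + |kn / n * (c * d)| := abs_add_le _ _
    _ ≤ (|b * e| + |c * d * e|) + |kn / n * (c * d)| := by gcongr; exact abs_add_le _ _
    _ ≤ (K * |e| + K * K * |e|) + |kn| / n * (K * K) :=
        add_le_add (add_le_add e1 e2) e3
    _ ≤ 2 * K ^ 2 * |e| + K ^ 3 / n := by
        have hKK : K ≤ K ^ 2 := by nlinarith
        have h2 : K * |e| ≤ K ^ 2 * |e| := mul_le_mul_of_nonneg_right hKK (abs_nonneg e)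
        have h2' : K * K * |e| = K ^ 2 * |e| := by ring
        have h3 : |kn| / n * (K * K) ≤ K ^ 3 / n := by
          rw [div_mul_eq_mul_div]
          refine (div_le_div_iff_of_pos_right hn0).mpr ?_
          calc |kn| * (K * K) ≤ K * (K * K) :=
                mul_le_mul_of_nonneg_right hkn (by positivity)
          _ = K ^ 3 := by ring
        linarith
  have hαdiff : |α - αN| ≤ K ^ 2 * |e| + K ^ 3 / n := by
    have hid : α - αN = -(e * d ^ 2) - kn / n * d ^ 2 := by
      rw [hαdef, hαNdef, hedef]; ring
    rw [hid]
    calc |(-(e * d ^ 2)) - kn / n * d ^ 2| ≤ |(-(e * d ^ 2))| + |kn / n * d ^ 2| := abs_sub _ _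
    _ = |e| * |d ^ 2| + |kn / n| * |d ^ 2| := by rw [abs_neg, abs_mul, abs_mul]
    _ ≤ |e| * K ^ 2 + (|kn| / n) * K ^ 2 := by
        rw [abs_div, abs_of_pos hn0]; gcongr
    _ ≤ K ^ 2 * |e| + K ^ 3 / n := by
        have h3 : |kn| / n * K ^ 2 ≤ K ^ 3 / n := by
          rw [div_mul_eq_mul_div]
          refine (div_le_div_iff_of_pos_right hn0).mpr ?_
          calc |kn| * K ^ 2 ≤ K * K ^ 2 := mul_le_mul_of_nonneg_right hkn (by positivity)
          _ = K ^ 3 := by ring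
        have h4 : |e| * K ^ 2 = K ^ 2 * |e| := by ring
        linarith
  -- the quotient difference
  have hnum : |α * βN ^ 2 - αN * β ^ 2| ≤ 24 * K ^ 8 * |e| + 14 * K ^ 9 / n := by
    have hid : α * βN ^ 2 - αN * β ^ 2 = α * ((βN - β) * (βN + β)) + β ^ 2 * (α - αN) := by ring
    rw [hid]
    have hβsum : |βN + β| ≤ 5 * K ^ 3 := by
      calc |βN + β| ≤ |βN| + |β| := abs_add_le _ _
      _ ≤ 3 * K ^ 3 + 2 * K ^ 3 := add_le_add hβNb hβb
      _ = 5 * K ^ 3 := by ring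
    calc |α * ((βN - β) * (βN + β)) + β ^ 2 * (α - αN)|
        ≤ |α| * (|βN - β| * |βN + β|) + |β| ^ 2 * |α - αN| := by
          refine (abs_add_le _ _).trans (le_of_eq ?_)
          rw [abs_mul, abs_mul, abs_mul, abs_pow]
    _ ≤ 2 * K ^ 3 * ((2 * K ^ 2 * |e| + K ^ 3 / n) * (5 * K ^ 3))
          + (2 * K ^ 3) ^ 2 * (K ^ 2 * |e| + K ^ 3 / n) := by
        gcongr
    _ = 24 * K ^ 8 * |e| + 14 * K ^ 9 / n := by ring
  have hden : ε ^ 2 ≤ |α * αN| := by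
    rw [abs_mul]
    calc ε ^ 2 = ε * ε := sq ε
    _ ≤ |α| * |αN| := mul_le_mul hα hαN (le_of_lt hε) (abs_nonneg _)
  -- main identity
  have hmain : (2 * a * pn - pn * b * αN⁻¹ * βN + c * (pn + kn / n) * (c - d * αN⁻¹ * βN)
        + (1 - γ / n) * q) - (2 * a * p + c ^ 2 * p - α⁻¹ * β ^ 2 + q)
      = 2 * a * e + c ^ 2 * e - (α * βN ^ 2 - αN * β ^ 2) / (α * αN)
        + (c ^ 2 * (kn / n) - γ * q / n) := by
    rw [hαdef, hαNdef, hβdef, hβNdef, hedef]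
    rw [hαdef] at hα0; rw [hαNdef] at hαN0
    exact riccati_identity a b c d q r γ p pn (kn / n) n (ne_of_gt hn0) hα0 hαN0
  rw [hmain]
  have h1 : |2 * a * e + c ^ 2 * e| ≤ 3 * K ^ 2 * |e| := by
    have g1 : |2 * a * e| ≤ 2 * K * |e| := by
      rw [abs_mul, abs_mul, abs_two]; gcongr
    have g2 : |c ^ 2 * e| ≤ K ^ 2 * |e| := by
      rw [abs_mul, abs_pow]
      exact mul_le_mul_of_nonneg_right (pow_le_pow_left₀ (abs_nonneg c) hc 2) (abs_nonneg e)
    calc |2 * a * e + c ^ 2 * e| ≤ |2 * a * e| + |c ^ 2 * e| := abs_add_le _ _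
    _ ≤ 2 * K * |e| + K ^ 2 * |e| := add_le_add g1 g2
    _ ≤ 3 * K ^ 2 * |e| := by
        have hKK : K ≤ K ^ 2 := by nlinarith
        nlinarith [mul_le_mul_of_nonneg_right hKK (abs_nonneg e)]
  have h2 : |(α * βN ^ 2 - αN * β ^ 2) / (α * αN)| ≤ (24 * K ^ 8 * |e| + 14 * K ^ 9 / n) / ε ^ 2 := by
    rw [abs_div]
    calc |α * βN ^ 2 - αN * β ^ 2| / |α * αN| ≤ |α * βN ^ 2 - αN * β ^ 2| / ε ^ 2 :=
          div_le_div_of_nonneg_left (abs_nonneg _) (by positivity) hden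
    _ ≤ (24 * K ^ 8 * |e| + 14 * K ^ 9 / n) / ε ^ 2 :=
          (div_le_div_iff_of_pos_right (by positivity)).mpr hnum
  have h3 : |c ^ 2 * (kn / n) - γ * q / n| ≤ 2 * K ^ 3 / n := by
    have h3a : |c ^ 2 * (kn / n)| ≤ K ^ 3 / n := by
      rw [abs_mul, abs_pow, abs_div, abs_of_pos hn0, ← mul_div_assoc]
      refine (div_le_div_iff_of_pos_right hn0).mpr ?_
      calc |c| ^ 2 * |kn| ≤ K ^ 2 * K :=
            mul_le_mul (pow_le_pow_left₀ (abs_nonneg c) hc 2) hkn (abs_nonneg _) (by positivity)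
      _ = K ^ 3 := by ring
    have h3b : |γ * q / n| ≤ K ^ 3 / n := by
      rw [abs_div, abs_of_pos hn0, abs_mul]
      refine (div_le_div_iff_of_pos_right hn0).mpr ?_
      calc |γ| * |q| ≤ K * K := mul_le_mul hγ hq (abs_nonneg _) hK0.le
      _ ≤ K ^ 3 := by nlinarith
    calc |c ^ 2 * (kn / n) - γ * q / n| ≤ |c ^ 2 * (kn / n)| + |γ * q / n| := abs_sub _ _
    _ ≤ K ^ 3 / n + K ^ 3 / n := add_le_add h3a h3b
    _ = 2 * K ^ 3 / n := by ring
  calc |2 * a * e + c ^ 2 * e - (α * βN ^ 2 - αN * β ^ 2) / (α * αN)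
          + (c ^ 2 * (kn / n) - γ * q / n)|
      ≤ |2 * a * e + c ^ 2 * e - (α * βN ^ 2 - αN * β ^ 2) / (α * αN)|
        + |c ^ 2 * (kn / n) - γ * q / n| := abs_add_le _ _
  _ ≤ (|2 * a * e + c ^ 2 * e| + |(α * βN ^ 2 - αN * β ^ 2) / (α * αN)|)
        + |c ^ 2 * (kn / n) - γ * q / n| := by gcongr; exact abs_sub _ _
  _ ≤ (3 * K ^ 2 * |e| + (24 * K ^ 8 * |e| + 14 * K ^ 9 / n) / ε ^ 2) + 2 * K ^ 3 / n :=
        add_le_add (add_le_add h1 h2) h3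
  _ = (3 * K ^ 2 + 24 * K ^ 8 / ε ^ 2) * |e| + (2 * K ^ 3 + 14 * K ^ 9 / ε ^ 2) / n := by
        field_simp; ring

set_option maxHeartbeats 1600000 in
/-- Continuous dependence of the Riccati solution on the parameter `1/N`:
the solution `P_N` of the `N`-dependent Riccati equation converges to the solution `P`
of the limiting Riccati equation at rate `1/N` in supremum norm on `[0,T]`. -/
theorem stmt_10 (T : ℝ) (hT : 0 < T)
    (A B C D Q R Γ : ℝ → ℝ)
    (hA : ContinuousOn A (Icc 0 T)) (hB : ContinuousOn B (Icc 0 T))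
    (hC : ContinuousOn C (Icc 0 T)) (hD : ContinuousOn D (Icc 0 T))
    (hQ : ContinuousOn Q (Icc 0 T)) (hR : ContinuousOn R (Icc 0 T))
    (hΓ : ContinuousOn Γ (Icc 0 T))
    (H Γ₀ : ℝ) (ε : ℝ) (hε : 0 < ε) (M : ℝ) (hM : 0 ≤ M)
    (P : ℝ → ℝ) (hPT : P T = H)
    (hPα : ∀ t ∈ Icc (0 : ℝ) T, ε ≤ |R t + P t * D t ^ 2|)
    (hPode : ∀ t ∈ Icc (0 : ℝ) T,
      HasDerivAt P
        (-(2 * A t * P t + C t ^ 2 * P t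
          - (R t + P t * D t ^ 2)⁻¹ * (B t * P t + P t * C t * D t) ^ 2 + Q t)) t) :
    ∃ c : ℝ, 0 ≤ c ∧
      ∀ N : ℕ, 1 ≤ N → ∀ PN KN : ℝ → ℝ,
        PN T = H * (1 - Γ₀ / (N : ℝ)) →
        (∀ t ∈ Icc (0 : ℝ) T, |PN t| ≤ M) →
        (∀ t ∈ Icc (0 : ℝ) T, |KN t| ≤ M) →
        (∀ t ∈ Icc (0 : ℝ) T, ε ≤ |R t + (PN t + KN t / (N : ℝ)) * D t ^ 2|) →
        (∀ t ∈ Icc (0 : ℝ) T,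
          HasDerivAt PN
            (-(2 * A t * PN t
              - PN t * B t * (R t + (PN t + KN t / (N : ℝ)) * D t ^ 2)⁻¹
                  * (B t * PN t + (PN t + KN t / (N : ℝ)) * C t * D t)
              + C t * (PN t + KN t / (N : ℝ))
                  * (C t - D t * (R t + (PN t + KN t / (N : ℝ)) * D t ^ 2)⁻¹
                      * (B t * PN t + (PN t + KN t / (N : ℝ)) * C t * D t))
              + (1 - Γ t / (N : ℝ)) * Q t)) t) →
        ∀ t ∈ Icc (0 : ℝ) T, |PN t - P t| ≤ c / N := by
  -- continuity of P
  have hPc : ContinuousOn P (Icc 0 T) := fun t ht =>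
    (hPode t ht).continuousAt.continuousWithinAt
  -- bounds
  obtain ⟨CA, hCA⟩ := isCompact_Icc.exists_bound_of_continuousOn hA
  obtain ⟨CB, hCB⟩ := isCompact_Icc.exists_bound_of_continuousOn hB
  obtain ⟨CC, hCC⟩ := isCompact_Icc.exists_bound_of_continuousOn hC
  obtain ⟨CD, hCD⟩ := isCompact_Icc.exists_bound_of_continuousOn hD
  obtain ⟨CQ, hCQ⟩ := isCompact_Icc.exists_bound_of_continuousOn hQ
  obtain ⟨CR, hCR⟩ := isCompact_Icc.exists_bound_of_continuousOn hR
  obtain ⟨CΓ, hCΓ⟩ := isCompact_Icc.exists_bound_of_continuousOn hΓ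
  obtain ⟨CP, hCP⟩ := isCompact_Icc.exists_bound_of_continuousOn hPc
  set K : ℝ := 1 + M + |CA| + |CB| + |CC| + |CD| + |CQ| + |CR| + |CΓ| + |CP| with hKdef
  have habs : (0:ℝ) ≤ |CA| + |CB| + |CC| + |CD| + |CQ| + |CR| + |CΓ| + |CP| := by positivity
  have hK1 : 1 ≤ K := by rw [hKdef]; linarith
  have hK0 : (0:ℝ) < K := lt_of_lt_of_le one_pos hK1
  have hMK : M ≤ K := by
    rw [hKdef]; linarith
  have hAK : ∀ t ∈ Icc (0:ℝ) T, |A t| ≤ K := fun t ht => by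
    have h := hCA t ht; rw [Real.norm_eq_abs] at h
    rw [hKdef]
    have := le_abs_self CA
    have := abs_nonneg CB; have := abs_nonneg CC; have := abs_nonneg CD
    have := abs_nonneg CQ; have := abs_nonneg CR; have := abs_nonneg CΓ
    have := abs_nonneg CP
    linarith
  have hBK : ∀ t ∈ Icc (0:ℝ) T, |B t| ≤ K := fun t ht => by
    have h := hCB t ht; rw [Real.norm_eq_abs] at h
    rw [hKdef]
    have := le_abs_self CB
    have := abs_nonneg CA; have := abs_nonneg CC; have := abs_nonneg CD
    have := abs_nonneg CQ; have := abs_nonneg CR; have := abs_nonneg CΓ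
    have := abs_nonneg CP
    linarith
  have hCK : ∀ t ∈ Icc (0:ℝ) T, |C t| ≤ K := fun t ht => by
    have h := hCC t ht; rw [Real.norm_eq_abs] at h
    rw [hKdef]
    have := le_abs_self CC
    have := abs_nonneg CA; have := abs_nonneg CB; have := abs_nonneg CD
    have := abs_nonneg CQ; have := abs_nonneg CR; have := abs_nonneg CΓ
    have := abs_nonneg CP
    linarith
  have hDK : ∀ t ∈ Icc (0:ℝ) T, |D t| ≤ K := fun t ht => by
    have h := hCD t ht; rw [Real.norm_eq_abs] at h
    rw [hKdef]
    have := le_abs_self CD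
    have := abs_nonneg CA; have := abs_nonneg CB; have := abs_nonneg CC
    have := abs_nonneg CQ; have := abs_nonneg CR; have := abs_nonneg CΓ
    have := abs_nonneg CP
    linarith
  have hQK : ∀ t ∈ Icc (0:ℝ) T, |Q t| ≤ K := fun t ht => by
    have h := hCQ t ht; rw [Real.norm_eq_abs] at h
    rw [hKdef]
    have := le_abs_self CQ
    have := abs_nonneg CA; have := abs_nonneg CB; have := abs_nonneg CC
    have := abs_nonneg CD; have := abs_nonneg CR; have := abs_nonneg CΓ
    have := abs_nonneg CP
    linarith
  have hRK : ∀ t ∈ Icc (0:ℝ) T, |R t| ≤ K := fun t ht => by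
    have h := hCR t ht; rw [Real.norm_eq_abs] at h
    rw [hKdef]
    have := le_abs_self CR
    have := abs_nonneg CA; have := abs_nonneg CB; have := abs_nonneg CC
    have := abs_nonneg CD; have := abs_nonneg CQ; have := abs_nonneg CΓ
    have := abs_nonneg CP
    linarith
  have hΓK : ∀ t ∈ Icc (0:ℝ) T, |Γ t| ≤ K := fun t ht => by
    have h := hCΓ t ht; rw [Real.norm_eq_abs] at h
    rw [hKdef]
    have := le_abs_self CΓ
    have := abs_nonneg CA; have := abs_nonneg CB; have := abs_nonneg CC
    have := abs_nonneg CD; have := abs_nonneg CQ; have := abs_nonneg CR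
    have := abs_nonneg CP
    linarith
  have hPK : ∀ t ∈ Icc (0:ℝ) T, |P t| ≤ K := fun t ht => by
    have h := hCP t ht; rw [Real.norm_eq_abs] at h
    rw [hKdef]
    have := le_abs_self CP
    have := abs_nonneg CA; have := abs_nonneg CB; have := abs_nonneg CC
    have := abs_nonneg CD; have := abs_nonneg CQ; have := abs_nonneg CR
    have := abs_nonneg CΓ
    linarith
  clear_value K
  -- constants
  set L : ℝ := 3 * K ^ 2 + 24 * K ^ 8 / ε ^ 2 with hLdef
  set c₁ : ℝ := 2 * K ^ 3 + 14 * K ^ 9 / ε ^ 2 with hc₁def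
  have hL : 0 < L := by
    rw [hLdef]
    have h1 : (0:ℝ) < 3 * K ^ 2 := by positivity
    have h2 : (0:ℝ) ≤ 24 * K ^ 8 / ε ^ 2 := by positivity
    linarith
  have hc₁ : 0 ≤ c₁ := by
    rw [hc₁def]
    have h1 : (0:ℝ) ≤ 2 * K ^ 3 := by positivity
    have h2 : (0:ℝ) ≤ 14 * K ^ 9 / ε ^ 2 := by positivity
    linarith
  clear_value L c₁
  refine ⟨(|H * Γ₀| + c₁ / L) * Real.exp (L * T), by positivity, ?_⟩
  intro N hN PN KN hPNT hPNb hKNb hαN hPNode t ht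
  set n : ℝ := (N : ℝ) with hndef
  have hn1 : (1:ℝ) ≤ n := by rw [hndef]; exact_mod_cast hN
  have hn0 : (0:ℝ) < n := lt_of_lt_of_le one_pos hn1
  set f : ℝ → ℝ := fun s => PN (T - s) - P (T - s) with hfdef
  set f' : ℝ → ℝ := fun s =>
    (2 * A (T - s) * PN (T - s)
        - PN (T - s) * B (T - s) * (R (T - s) + (PN (T - s) + KN (T - s) / n) * D (T - s) ^ 2)⁻¹
            * (B (T - s) * PN (T - s) + (PN (T - s) + KN (T - s) / n) * C (T - s) * D (T - s))
        + C (T - s) * (PN (T - s) + KN (T - s) / n)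
            * (C (T - s) - D (T - s)
                * (R (T - s) + (PN (T - s) + KN (T - s) / n) * D (T - s) ^ 2)⁻¹
                * (B (T - s) * PN (T - s) + (PN (T - s) + KN (T - s) / n) * C (T - s) * D (T - s)))
        + (1 - Γ (T - s) / n) * Q (T - s))
      - (2 * A (T - s) * P (T - s) + C (T - s) ^ 2 * P (T - s)
          - (R (T - s) + P (T - s) * D (T - s) ^ 2)⁻¹
              * (B (T - s) * P (T - s) + P (T - s) * C (T - s) * D (T - s)) ^ 2
          + Q (T - s)) with hf'def
  have hmem : ∀ s ∈ Icc (0:ℝ) T, T - s ∈ Icc (0:ℝ) T := fun s hs =>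
    ⟨by linarith [hs.2], by linarith [hs.1]⟩
  have hfc : ContinuousOn f (Icc 0 T) := by
    intro s hs
    have hm := hmem s hs
    have c1 : ContinuousAt (fun x : ℝ => T - x) s :=
      (continuous_const.sub continuous_id).continuousAt
    exact (((hPNode _ hm).continuousAt.comp c1).sub
      ((hPode _ hm).continuousAt.comp c1)).continuousWithinAt
  have hfderiv : ∀ s ∈ Ico (0:ℝ) T, HasDerivWithinAt f (f' s) (Ici s) s := by
    intro s hs
    have hm : T - s ∈ Icc (0:ℝ) T := hmem s ⟨hs.1, le_of_lt hs.2⟩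
    have hinner : HasDerivAt (fun x : ℝ => T - x) (-1) s := (hasDerivAt_id s).const_sub T
    have h1 := (hPNode (T - s) hm).comp s hinner
    have h2 := (hPode (T - s) hm).comp s hinner
    have h3 := h1.sub h2
    have : HasDerivAt f (f' s) s := by
      refine h3.congr_deriv ?_
      simp only [hf'def]
      ring
    exact this.hasDerivWithinAt
  have hf0 : ‖f 0‖ ≤ |H * Γ₀| / n := by
    have h0 : f 0 = -(H * Γ₀) / n := by
      simp only [hfdef, sub_zero, hPNT, hPT]
      field_simp
      ring
    rw [h0, Real.norm_eq_abs, abs_div, abs_neg, abs_of_pos hn0]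
  have hbound : ∀ s ∈ Ico (0:ℝ) T, ‖f' s‖ ≤ L * ‖f s‖ + c₁ / n := by
    intro s hs
    have hm : T - s ∈ Icc (0:ℝ) T := hmem s ⟨hs.1, le_of_lt hs.2⟩
    rw [Real.norm_eq_abs, Real.norm_eq_abs]
    simp only [hf'def, hfdef, hLdef, hc₁def]
    exact riccati_diff_bound K ε hK1 hε (A (T - s)) (B (T - s)) (C (T - s)) (D (T - s))
      (Q (T - s)) (R (T - s)) (Γ (T - s)) (P (T - s)) (PN (T - s)) (KN (T - s)) n hn1
      (hAK _ hm) (hBK _ hm) (hCK _ hm) (hDK _ hm) (hQK _ hm) (hRK _ hm) (hΓK _ hm)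
      (hPK _ hm) ((hPNb _ hm).trans hMK) ((hKNb _ hm).trans hMK) (hPα _ hm) (hαN _ hm)
  have hgron := norm_le_gronwallBound_of_norm_deriv_right_le hfc hfderiv hf0 hbound
  have hx : T - t ∈ Icc (0:ℝ) T := hmem t ht
  have hval := hgron (T - t) hx
  have hfx : f (T - t) = PN t - P t := by
    simp only [hfdef, sub_sub_cancel]
  rw [hfx, Real.norm_eq_abs, sub_zero] at hval
  refine hval.trans ?_
  -- bound the gronwallBound by c / n
  rw [gronwallBound_of_K_ne_0 (ne_of_gt hL)]
  have hTt : 0 ≤ T - t := by linarith [ht.2]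
  have hTt' : T - t ≤ T := by linarith [ht.1]
  have hE : Real.exp (L * (T - t)) ≤ Real.exp (L * T) := by
    apply Real.exp_le_exp.mpr
    nlinarith
  have hEpos : (0:ℝ) < Real.exp (L * (T - t)) := Real.exp_pos _
  have h1 : |H * Γ₀| / n * Real.exp (L * (T - t)) ≤ |H * Γ₀| / n * Real.exp (L * T) :=
    mul_le_mul_of_nonneg_left hE (by positivity)
  have h2 : c₁ / n / L * (Real.exp (L * (T - t)) - 1) ≤ c₁ / n / L * Real.exp (L * T) :=
    mul_le_mul_of_nonneg_left (by linarith) (by positivity)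
  have heq : |H * Γ₀| / n * Real.exp (L * T) + c₁ / n / L * Real.exp (L * T)
      = (|H * Γ₀| + c₁ / L) * Real.exp (L * T) / n := by
    field_simp
  linarith
end

section
/- Let T > 0, let A, B, C, D, Q, R, Γ : ℝ → ℝ be continuous on [0,T], let H, Γ₀ ∈ ℝ, and fix ε > 0, M ≥ 0, c₀ ≥ 0. Suppose P, K : ℝ → ℝ are differentiable on [0,T] with P(T) = H, K(T) = −H·Γ₀, |P| ≤ M, |K| ≤ M, |α| ≥ ε on [0,T] where α := R + PD², β := BP + PCD, γ := BK, and K satisfies K'(t) + 2A(t)K(t) − K(t)B(t)α(t)⁻¹(β(t) + γ(t)) − β(t)α(t)⁻¹γ(t) − Q(t)Γ(t) = 0 on [0,T]. Then there exists c ≥ 0 such that for every natural number N ≥ 1 and every pair P_N, K_N : ℝ → ℝ differentiable on [0,T] with K_N(T) = −H·(1 − Γ₀/N)·Γ₀, |P_N| ≤ M, |K_N| ≤ M, |α_N| ≥ ε on [0,T] (where α_N := R + (P_N + K_N/N)D², β_N := BP_N + (P_N + K_N/N)CD, γ_N := BK_N), satisfying sup_{t∈[0,T]}|P_N(t) − P(t)|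 ≤ c₀/N and K_N'(t) + 2A(t)K_N(t) − P_N(t)B(t)α_N(t)⁻¹γ_N(t) − K_N(t)B(t)α_N(t)⁻¹(β_N(t) + γ_N(t)) − C(t)D(t)(P_N(t) + K_N(t)/N)α_N(t)⁻¹γ_N(t) − (1 − Γ(t)/N)Q(t)Γ(t) = 0 on [0,T], one has sup_{t ∈ [0,T]} |K_N(t) − K(t)| ≤ c/N. -/
open Set Real

lemma aux_prod4 {x₁ x₂ x₃ x₄ y₁ y₂ y₃ y₄ Bd : ℝ}
    (h1 : |x₁| ≤ Bd) (h2 : |x₂| ≤ Bd) (h3 : |x₃| ≤ Bd) (h4 : |x₄| ≤ Bd)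
    (g1 : |y₁| ≤ Bd) (g2 : |y₂| ≤ Bd) (g3 : |y₃| ≤ Bd) (g4 : |y₄| ≤ Bd) :
    |x₁*x₂*x₃*x₄ - y₁*y₂*y₃*y₄| ≤ Bd^3 * (|x₁-y₁| + |x₂-y₂| + |x₃-y₃| + |x₄-y₄|) := by
  have hBd : 0 ≤ Bd := le_trans (abs_nonneg _) h1
  have key : x₁*x₂*x₃*x₄ - y₁*y₂*y₃*y₄ =
      (x₁-y₁)*x₂*x₃*x₄ + y₁*((x₂-y₂)*x₃*x₄) + y₁*(y₂*((x₃-y₃)*x₄)) + y₁*(y₂*(y₃*(x₄-y₄))) := by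
    ring
  rw [key]
  have e1 : |(x₁-y₁)*x₂*x₃*x₄| ≤ Bd^3 * |x₁-y₁| := by
    rw [abs_mul, abs_mul, abs_mul]
    calc |x₁-y₁| * |x₂| * |x₃| * |x₄| ≤ |x₁-y₁| * Bd * Bd * Bd := by gcongr
      _ = Bd^3 * |x₁-y₁| := by ring
  have e2 : |y₁*((x₂-y₂)*x₃*x₄)| ≤ Bd^3 * |x₂-y₂| := by
    rw [abs_mul, abs_mul, abs_mul]
    calc |y₁| * (|x₂-y₂| * |x₃| * |x₄|) ≤ Bd * (|x₂-y₂| * Bd * Bd) := by gcongr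
      _ = Bd^3 * |x₂-y₂| := by ring
  have e3 : |y₁*(y₂*((x₃-y₃)*x₄))| ≤ Bd^3 * |x₃-y₃| := by
    rw [abs_mul, abs_mul, abs_mul]
    calc |y₁| * (|y₂| * (|x₃-y₃| * |x₄|)) ≤ Bd * (Bd * (|x₃-y₃| * Bd)) := by gcongr
      _ = Bd^3 * |x₃-y₃| := by ring
  have e4 : |y₁*(y₂*(y₃*(x₄-y₄)))| ≤ Bd^3 * |x₄-y₄| := by
    rw [abs_mul, abs_mul, abs_mul]
    calc |y₁| * (|y₂| * (|y₃| * |x₄-y₄|)) ≤ Bd * (Bd * (Bd * |x₄-y₄|)) := by gcongr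
      _ = Bd^3 * |x₄-y₄| := by ring
  calc |_ + _ + _ + _| ≤ |(x₁-y₁)*x₂*x₃*x₄ + y₁*((x₂-y₂)*x₃*x₄) + y₁*(y₂*((x₃-y₃)*x₄))|
        + |y₁*(y₂*(y₃*(x₄-y₄)))| := abs_add_le _ _
    _ ≤ (|(x₁-y₁)*x₂*x₃*x₄ + y₁*((x₂-y₂)*x₃*x₄)| + |y₁*(y₂*((x₃-y₃)*x₄))|)
        + |y₁*(y₂*(y₃*(x₄-y₄)))| := by gcongr; exact abs_add_le _ _
    _ ≤ ((|(x₁-y₁)*x₂*x₃*x₄| + |y₁*((x₂-y₂)*x₃*x₄)|) + |y₁*(y₂*((x₃-y₃)*x₄))|)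
        + |y₁*(y₂*(y₃*(x₄-y₄)))| := by gcongr; exact abs_add_le _ _
    _ ≤ Bd^3 * (|x₁-y₁| + |x₂-y₂| + |x₃-y₃| + |x₄-y₄|) := by linarith

lemma aux_inv {a b ε m : ℝ} (hε : 0 < ε) (ha : ε ≤ |a|) (hb : ε ≤ |b|) (hm : |b - a| ≤ m) :
    |b⁻¹ - a⁻¹| ≤ m / ε^2 := by
  have ha0 : a ≠ 0 := by intro h; rw [h, abs_zero] at ha; linarith
  have hb0 : b ≠ 0 := by intro h; rw [h, abs_zero] at hb; linarith
  rw [inv_sub_inv hb0 ha0, abs_div, abs_mul, abs_sub_comm]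
  have hm0 : 0 ≤ m := le_trans (abs_nonneg _) hm
  have h2 : ε^2 ≤ |b| * |a| := by nlinarith [abs_nonneg a, abs_nonneg b]
  exact div_le_div₀ hm0 hm (by positivity) h2

lemma key_est (Av Bv Cv Dv Qv Rv Γv Pv Kv PNv KNv a aN Nr ε M c₀ L₀ Bd D₀ : ℝ)
    (hε : 0 < ε) (hM : 0 ≤ M) (hc₀ : 0 ≤ c₀) (hL₀1 : 1 ≤ L₀)
    (hN1 : 1 ≤ Nr)
    (hadef : a = Rv + Pv * Dv ^ 2) (haNdef : aN = Rv + (PNv + KNv / Nr) * Dv ^ 2)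
    (hεa : ε ≤ |a|) (hεaN : ε ≤ |aN|)
    (hAu : |Av| ≤ L₀) (hBu : |Bv| ≤ L₀) (hCu : |Cv| ≤ L₀) (hDu : |Dv| ≤ L₀)
    (hQu : |Qv| ≤ L₀) (hRu : |Rv| ≤ L₀) (hΓu : |Γv| ≤ L₀)
    (hPM : |Pv| ≤ M) (hKM : |Kv| ≤ M) (hPNM : |PNv| ≤ M) (hKNM : |KNv| ≤ M)
    (hPP : |PNv - Pv| ≤ c₀/Nr)
    (hBd0 : 0 ≤ Bd) (hL₀Bd : L₀ ≤ Bd) (hMBd : M ≤ Bd) (hεiBd : ε⁻¹ ≤ Bd)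
    (hL₀M : L₀*M ≤ Bd) (hL₀2 : L₀^2 ≤ Bd) (h2M : 2*M ≤ Bd)
    (hβNBd : 2*(L₀*M) + 2*M*L₀^2 ≤ Bd) (hβBd : 2*(L₀*M) + M*L₀^2 ≤ Bd)
    (hD₀0 : 0 ≤ D₀) (hD₀1 : c₀ ≤ D₀) (hD₀2 : c₀ + M ≤ D₀)
    (hD₀3 : (c₀+M)*L₀^2/ε^2 ≤ D₀) (hD₀4 : L₀*c₀ + (c₀+M)*L₀^2 ≤ D₀) :
    |(-(2 * Av * KNv
        - PNv * Bv * aN⁻¹ * (Bv * KNv)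
        - KNv * Bv * aN⁻¹ * ((Bv * PNv + (PNv + KNv / Nr) * Cv * Dv) + Bv * KNv)
        - Cv * Dv * (PNv + KNv / Nr) * aN⁻¹ * (Bv * KNv)
        - (1 - Γv / Nr) * Qv * Γv))
      - (-(2 * Av * Kv
        - Kv * Bv * a⁻¹ * ((Bv * Pv + Pv * Cv * Dv) + Bv * Kv)
        - (Bv * Pv + Pv * Cv * Dv) * a⁻¹ * (Bv * Kv)
        - Qv * Γv))|
      ≤ (2*L₀ + Bd^3*(3*L₀+1)) * |KNv - Kv| + (6*Bd^3*D₀ + L₀^3) / Nr := by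
  have hL₀0 : (0:ℝ) < L₀ := lt_of_lt_of_le one_pos hL₀1
  have hNpos : (0:ℝ) < Nr := lt_of_lt_of_le one_pos hN1
  have hBd3 : (0:ℝ) ≤ Bd^3 := by positivity
  have hainv : |a⁻¹| ≤ ε⁻¹ := by
    rw [abs_inv]; exact inv_anti₀ hε hεa
  have haNinv : |aN⁻¹| ≤ ε⁻¹ := by
    rw [abs_inv]; exact inv_anti₀ hε hεaN
  have hE0 : (0:ℝ) ≤ |KNv - Kv| := abs_nonneg _
  -- |PN + KN/Nr| ≤ 2M
  have hPNKN : |PNv + KNv / Nr| ≤ 2*M := by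
    have h1 : |KNv / Nr| ≤ M := by
      rw [abs_div, abs_of_pos hNpos]
      calc |KNv| / Nr ≤ M / Nr := by gcongr
        _ ≤ M / 1 := by gcongr
        _ = M := div_one M
    calc |PNv + KNv / Nr| ≤ |PNv| + |KNv / Nr| := abs_add_le _ _
      _ ≤ 2*M := by linarith
  -- bound on |aN⁻¹ - a⁻¹|
  have hdP2 : |(PNv + KNv / Nr) - Pv| ≤ (c₀ + M)/Nr := by
    have h1 : |KNv / Nr| ≤ M/Nr := by
      rw [abs_div, abs_of_pos hNpos]; gcongr
    calc |(PNv + KNv / Nr) - Pv| = |(PNv - Pv) + KNv / Nr| := by ring_nf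
      _ ≤ |PNv - Pv| + |KNv / Nr| := abs_add_le _ _
      _ ≤ c₀/Nr + M/Nr := by linarith
      _ = (c₀ + M)/Nr := by ring
  have hdaa : |aN - a| ≤ (c₀ + M)*L₀^2/Nr := by
    have h1 : aN - a = ((PNv + KNv / Nr) - Pv) * Dv ^ 2 := by
      rw [haNdef, hadef]; ring
    rw [h1, abs_mul]
    have h2 : |Dv ^ 2| ≤ L₀^2 := by
      rw [abs_pow]; exact pow_le_pow_left₀ (abs_nonneg _) hDu 2
    calc |(PNv + KNv / Nr) - Pv| * |Dv ^ 2| ≤ ((c₀+M)/Nr) * L₀^2 := by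
          apply mul_le_mul hdP2 h2 (abs_nonneg _) (by positivity)
      _ = (c₀ + M)*L₀^2/Nr := by ring
  have hdinv : |aN⁻¹ - a⁻¹| ≤ D₀/Nr := by
    have h1 := aux_inv hε hεa hεaN hdaa
    refine h1.trans ?_
    have h2 : (c₀ + M)*L₀^2/Nr/ε^2 = ((c₀+M)*L₀^2/ε^2)/Nr := by ring
    rw [h2]
    gcongr
  -- differences of the simple factors
  have hd1 : |PNv - Pv| ≤ D₀/Nr := hPP.trans (by gcongr)
  have hd2 : |(PNv + KNv / Nr) - Pv| ≤ D₀/Nr := hdP2.trans (by gcongr)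
  have hd3 : |Bv * KNv - Bv * Kv| ≤ L₀ * |KNv - Kv| := by
    rw [← mul_sub, abs_mul]
    exact mul_le_mul_of_nonneg_right hBu (abs_nonneg _)
  -- difference of the beta+gamma factor
  have hd4 : |((Bv * PNv + (PNv + KNv / Nr) * Cv * Dv) + Bv * KNv)
      - ((Bv * Pv + Pv * Cv * Dv) + Bv * Kv)| ≤ D₀/Nr + L₀ * |KNv - Kv| := by
    have hsplit : ((Bv * PNv + (PNv + KNv / Nr) * Cv * Dv) + Bv * KNv)
        - ((Bv * Pv + Pv * Cv * Dv) + Bv * Kv)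
        = Bv * (PNv - Pv) + ((PNv + KNv / Nr) - Pv) * (Cv * Dv)
          + Bv * (KNv - Kv) := by ring
    rw [hsplit]
    have e1 : |Bv * (PNv - Pv)| ≤ L₀ * (c₀/Nr) := by
      rw [abs_mul]; exact mul_le_mul hBu hPP (abs_nonneg _) (by linarith)
    have e2 : |((PNv + KNv / Nr) - Pv) * (Cv * Dv)| ≤ ((c₀+M)/Nr) * L₀^2 := by
      rw [abs_mul]
      have h2 : |Cv * Dv| ≤ L₀^2 := by
        rw [abs_mul]
        calc |Cv| * |Dv| ≤ L₀ * L₀ := mul_le_mul hCu hDu (abs_nonneg _) hL₀0.le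
          _ = L₀^2 := by ring
      exact mul_le_mul hdP2 h2 (abs_nonneg _) (by positivity)
    have e3 : |Bv * (KNv - Kv)| ≤ L₀ * |KNv - Kv| := by
      rw [abs_mul]; exact mul_le_mul_of_nonneg_right hBu (abs_nonneg _)
    have hDge : L₀*c₀/Nr + (c₀+M)*L₀^2/Nr ≤ D₀/Nr := by
      have h2 : L₀*c₀/Nr + (c₀+M)*L₀^2/Nr = (L₀*c₀ + (c₀+M)*L₀^2)/Nr := by ring
      rw [h2]
      gcongr
    calc |_ + _ + _| ≤ |Bv * (PNv - Pv) + ((PNv + KNv / Nr) - Pv) * (Cv * Dv)|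
          + |Bv * (KNv - Kv)| := abs_add_le _ _
      _ ≤ |Bv * (PNv - Pv)| + |((PNv + KNv / Nr) - Pv) * (Cv * Dv)|
          + |Bv * (KNv - Kv)| := by gcongr; exact abs_add_le _ _
      _ ≤ L₀*(c₀/Nr) + ((c₀+M)/Nr)*L₀^2 + L₀ * |KNv - Kv| := by linarith
      _ ≤ D₀/Nr + L₀ * |KNv - Kv| := by
          have : L₀*(c₀/Nr) + ((c₀+M)/Nr)*L₀^2 = L₀*c₀/Nr + (c₀+M)*L₀^2/Nr := by ring
          linarith [hDge]
  -- bounds of all factors by Bd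
  have fPN : |PNv| ≤ Bd := hPNM.trans hMBd
  have fP : |Pv| ≤ Bd := hPM.trans hMBd
  have fKN : |KNv| ≤ Bd := hKNM.trans hMBd
  have fK : |Kv| ≤ Bd := hKM.trans hMBd
  have fB : |Bv| ≤ Bd := hBu.trans hL₀Bd
  have faN : |aN⁻¹| ≤ Bd := haNinv.trans hεiBd
  have fa : |a⁻¹| ≤ Bd := hainv.trans hεiBd
  have fBKN : |Bv * KNv| ≤ Bd := by
    rw [abs_mul]
    calc |Bv| * |KNv| ≤ L₀ * M := mul_le_mul hBu hKNM (abs_nonneg _) hL₀0.le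
      _ ≤ Bd := hL₀M
  have fBK : |Bv * Kv| ≤ Bd := by
    rw [abs_mul]
    calc |Bv| * |Kv| ≤ L₀ * M := mul_le_mul hBu hKM (abs_nonneg _) hL₀0.le
      _ ≤ Bd := hL₀M
  have fCD : |Cv * Dv| ≤ Bd := by
    rw [abs_mul]
    calc |Cv| * |Dv| ≤ L₀ * L₀ := mul_le_mul hCu hDu (abs_nonneg _) hL₀0.le
      _ = L₀^2 := by ring
      _ ≤ Bd := hL₀2
  have fPNKN : |PNv + KNv / Nr| ≤ Bd := hPNKN.trans h2M
  have fβN : |(Bv * PNv + (PNv + KNv / Nr) * Cv * Dv) + Bv * KNv| ≤ Bd := by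
    have e1 : |Bv * PNv| ≤ L₀ * M := by
      rw [abs_mul]; exact mul_le_mul hBu hPNM (abs_nonneg _) hL₀0.le
    have e2 : |(PNv + KNv / Nr) * Cv * Dv| ≤ 2*M*L₀^2 := by
      rw [abs_mul, abs_mul]
      have q1 : |PNv + KNv / Nr| * |Cv| ≤ 2*M * L₀ :=
        mul_le_mul hPNKN hCu (abs_nonneg _) (by linarith)
      have q2 : |PNv + KNv / Nr| * |Cv| * |Dv| ≤ 2*M * L₀ * L₀ :=
        mul_le_mul q1 hDu (abs_nonneg _) (mul_nonneg (by linarith) hL₀0.le)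
      calc |PNv + KNv / Nr| * |Cv| * |Dv| ≤ 2*M * L₀ * L₀ := q2
        _ = 2*M*L₀^2 := by ring
    have e3 : |Bv * KNv| ≤ L₀ * M := by
      rw [abs_mul]; exact mul_le_mul hBu hKNM (abs_nonneg _) hL₀0.le
    have h4 : 2*(L₀*M) + 2*M*L₀^2 ≤ Bd := hβNBd
    calc |_ + _| ≤ |Bv * PNv + (PNv + KNv / Nr) * Cv * Dv| + |Bv * KNv| :=
          abs_add_le _ _
      _ ≤ (|Bv * PNv| + |(PNv + KNv / Nr) * Cv * Dv|) + |Bv * KNv| := by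
          gcongr; exact abs_add_le _ _
      _ ≤ Bd := by linarith
  have fβ : |(Bv * Pv + Pv * Cv * Dv) + Bv * Kv| ≤ Bd := by
    have e1 : |Bv * Pv| ≤ L₀ * M := by
      rw [abs_mul]; exact mul_le_mul hBu hPM (abs_nonneg _) hL₀0.le
    have e2 : |Pv * Cv * Dv| ≤ M*L₀^2 := by
      rw [abs_mul, abs_mul]
      have q1 : |Pv| * |Cv| ≤ M * L₀ :=
        mul_le_mul hPM hCu (abs_nonneg _) hM
      have q2 : |Pv| * |Cv| * |Dv| ≤ M * L₀ * L₀ :=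
        mul_le_mul q1 hDu (abs_nonneg _) (mul_nonneg hM hL₀0.le)
      calc |Pv| * |Cv| * |Dv| ≤ M * L₀ * L₀ := q2
        _ = M*L₀^2 := by ring
    have e3 : |Bv * Kv| ≤ L₀ * M := by
      rw [abs_mul]; exact mul_le_mul hBu hKM (abs_nonneg _) hL₀0.le
    have h4 : 2*(L₀*M) + M*L₀^2 ≤ Bd := hβBd
    calc |_ + _| ≤ |Bv * Pv + Pv * Cv * Dv| + |Bv * Kv| := abs_add_le _ _
      _ ≤ (|Bv * Pv| + |Pv * Cv * Dv|) + |Bv * Kv| := by gcongr; exact abs_add_le _ _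
      _ ≤ Bd := by linarith
  -- term estimates
  have hzB : |Bv - Bv| = 0 := by simp
  have hzCD : |Cv * Dv - Cv * Dv| = 0 := by simp
  have hT1 : |PNv * Bv * aN⁻¹ * (Bv * KNv) - Pv * Bv * a⁻¹ * (Bv * Kv)|
      ≤ Bd^3 * (2*(D₀/Nr) + L₀*|KNv - Kv|) := by
    refine (aux_prod4 fPN fB faN fBKN fP fB fa fBK).trans ?_
    apply mul_le_mul_of_nonneg_left _ hBd3
    rw [hzB] at *
    linarith [hd1, hdinv, hd3, hzB]
  have hT2 : |KNv * Bv * aN⁻¹ * ((Bv * PNv + (PNv + KNv / Nr) * Cv * Dv) + Bv * KNv)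
      - Kv * Bv * a⁻¹ * ((Bv * Pv + Pv * Cv * Dv) + Bv * Kv)|
      ≤ Bd^3 * (2*(D₀/Nr) + (1 + L₀)*|KNv - Kv|) := by
    refine (aux_prod4 fKN fB faN fβN fK fB fa fβ).trans ?_
    apply mul_le_mul_of_nonneg_left _ hBd3
    have hz : |Bv - Bv| = 0 := by simp
    rw [hz]
    linarith [hdinv, hd4]
  have hT3 : |Cv * Dv * (PNv + KNv / Nr) * aN⁻¹ * (Bv * KNv)
      - Cv * Dv * Pv * a⁻¹ * (Bv * Kv)|
      ≤ Bd^3 * (2*(D₀/Nr) + L₀*|KNv - Kv|) := by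
    have h := aux_prod4 fCD fPNKN faN fBKN fCD fP fa fBK
    have hre : Cv * Dv * (PNv + KNv / Nr) * aN⁻¹ * (Bv * KNv)
        = (Cv * Dv) * (PNv + KNv / Nr) * aN⁻¹ * (Bv * KNv) := by ring
    have hre2 : Cv * Dv * Pv * a⁻¹ * (Bv * Kv)
        = (Cv * Dv) * Pv * a⁻¹ * (Bv * Kv) := by ring
    rw [hre, hre2]
    refine h.trans ?_
    apply mul_le_mul_of_nonneg_left _ hBd3
    rw [hzCD]
    linarith [hd2, hdinv, hd3]
  have hT4 : |(Γv / Nr) * Qv * Γv| ≤ L₀^3/Nr := by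
    rw [abs_mul, abs_mul, abs_div, abs_of_pos hNpos]
    calc |Γv| / Nr * |Qv| * |Γv| ≤ L₀ / Nr * L₀ * L₀ := by
          gcongr <;> positivity
      _ = L₀^3/Nr := by ring
  have hT0 : |2 * Av * (KNv - Kv)| ≤ 2*L₀*|KNv - Kv| := by
    rw [abs_mul, abs_mul]
    calc |2| * |Av| * |KNv - Kv| ≤ 2 * L₀ * |KNv - Kv| := by
          gcongr <;> simp [hAu]
      _ = 2*L₀*|KNv - Kv| := by ring
  -- the master decomposition
  have hsplit : (-(2 * Av * KNv
        - PNv * Bv * aN⁻¹ * (Bv * KNv)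
        - KNv * Bv * aN⁻¹
            * ((Bv * PNv + (PNv + KNv / Nr) * Cv * Dv) + Bv * KNv)
        - Cv * Dv * (PNv + KNv / Nr) * aN⁻¹ * (Bv * KNv)
        - (1 - Γv / Nr) * Qv * Γv))
      - (-(2 * Av * Kv
        - Kv * Bv * a⁻¹ * ((Bv * Pv + Pv * Cv * Dv) + Bv * Kv)
        - (Bv * Pv + Pv * Cv * Dv) * a⁻¹ * (Bv * Kv)
        - Qv * Γv))
      = -(2 * Av * (KNv - Kv))
        + (PNv * Bv * aN⁻¹ * (Bv * KNv) - Pv * Bv * a⁻¹ * (Bv * Kv))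
        + (KNv * Bv * aN⁻¹ * ((Bv * PNv + (PNv + KNv / Nr) * Cv * Dv) + Bv * KNv)
            - Kv * Bv * a⁻¹ * ((Bv * Pv + Pv * Cv * Dv) + Bv * Kv))
        + (Cv * Dv * (PNv + KNv / Nr) * aN⁻¹ * (Bv * KNv)
            - Cv * Dv * Pv * a⁻¹ * (Bv * Kv))
        + (-((Γv / Nr) * Qv * Γv)) := by ring
  rw [hsplit]
  have final : |(-(2 * Av * (KNv - Kv)))
        + (PNv * Bv * aN⁻¹ * (Bv * KNv) - Pv * Bv * a⁻¹ * (Bv * Kv))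
        + (KNv * Bv * aN⁻¹ * ((Bv * PNv + (PNv + KNv / Nr) * Cv * Dv) + Bv * KNv)
            - Kv * Bv * a⁻¹ * ((Bv * Pv + Pv * Cv * Dv) + Bv * Kv))
        + (Cv * Dv * (PNv + KNv / Nr) * aN⁻¹ * (Bv * KNv)
            - Cv * Dv * Pv * a⁻¹ * (Bv * Kv))
        + (-((Γv / Nr) * Qv * Γv))|
      ≤ 2*L₀*|KNv - Kv|
        + Bd^3 * (2*(D₀/Nr) + L₀*|KNv - Kv|)
        + Bd^3 * (2*(D₀/Nr) + (1 + L₀)*|KNv - Kv|)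
        + Bd^3 * (2*(D₀/Nr) + L₀*|KNv - Kv|)
        + L₀^3/Nr := by
    have s1 := abs_add_le (-(2 * Av * (KNv - Kv)))
      (PNv * Bv * aN⁻¹ * (Bv * KNv) - Pv * Bv * a⁻¹ * (Bv * Kv))
    have s2 := abs_add_le ((-(2 * Av * (KNv - Kv)))
      + (PNv * Bv * aN⁻¹ * (Bv * KNv) - Pv * Bv * a⁻¹ * (Bv * Kv)))
      (KNv * Bv * aN⁻¹ * ((Bv * PNv + (PNv + KNv / Nr) * Cv * Dv) + Bv * KNv)
            - Kv * Bv * a⁻¹ * ((Bv * Pv + Pv * Cv * Dv) + Bv * Kv))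
    have s3 := abs_add_le ((-(2 * Av * (KNv - Kv)))
      + (PNv * Bv * aN⁻¹ * (Bv * KNv) - Pv * Bv * a⁻¹ * (Bv * Kv))
      + (KNv * Bv * aN⁻¹ * ((Bv * PNv + (PNv + KNv / Nr) * Cv * Dv) + Bv * KNv)
            - Kv * Bv * a⁻¹ * ((Bv * Pv + Pv * Cv * Dv) + Bv * Kv)))
      (Cv * Dv * (PNv + KNv / Nr) * aN⁻¹ * (Bv * KNv)
            - Cv * Dv * Pv * a⁻¹ * (Bv * Kv))
    have s4 := abs_add_le ((-(2 * Av * (KNv - Kv)))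
      + (PNv * Bv * aN⁻¹ * (Bv * KNv) - Pv * Bv * a⁻¹ * (Bv * Kv))
      + (KNv * Bv * aN⁻¹ * ((Bv * PNv + (PNv + KNv / Nr) * Cv * Dv) + Bv * KNv)
            - Kv * Bv * a⁻¹ * ((Bv * Pv + Pv * Cv * Dv) + Bv * Kv))
      + (Cv * Dv * (PNv + KNv / Nr) * aN⁻¹ * (Bv * KNv)
            - Cv * Dv * Pv * a⁻¹ * (Bv * Kv)))
      (-((Γv / Nr) * Qv * Γv))
    have hn1 : |(-(2 * Av * (KNv - Kv)))| = |2 * Av * (KNv - Kv)| := abs_neg _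
    have hn2 : |(-((Γv / Nr) * Qv * Γv))| = |(Γv / Nr) * Qv * Γv| := abs_neg _
    rw [hn1] at s1
    rw [hn2] at s4
    linarith [hT0, hT1, hT2, hT3, hT4]
  refine final.trans ?_
  have hexp : 2*L₀*|KNv - Kv|
        + Bd^3 * (2*(D₀/Nr) + L₀*|KNv - Kv|)
        + Bd^3 * (2*(D₀/Nr) + (1 + L₀)*|KNv - Kv|)
        + Bd^3 * (2*(D₀/Nr) + L₀*|KNv - Kv|)
        + L₀^3/Nr = (2*L₀ + Bd^3*(3*L₀+1)) * |KNv - Kv| + (6*Bd^3*D₀ + L₀^3) / Nr := by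
    ring
  linarith [hexp.le]

set_option maxHeartbeats 1000000 in
/-- Continuous dependence on the parameter `1/N` for the second Riccati equation:
given that `P_N` is within `c₀/N` of the limiting `P` in supremum norm,
the solution `K_N` of the `N`-dependent Riccati equation is within `O(1/N)` of the
solution `K` of the limiting Riccati equation in supremum norm on `[0,T]`. -/
theorem stmt_11 (T : ℝ) (hT : 0 < T)
    (A B C D Q R Γ : ℝ → ℝ)
    (hA : ContinuousOn A (Icc 0 T)) (hB : ContinuousOn B (Icc 0 T))
    (hC : ContinuousOn C (Icc 0 T)) (hD : ContinuousOn D (Icc 0 T))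
    (hQ : ContinuousOn Q (Icc 0 T)) (hR : ContinuousOn R (Icc 0 T))
    (hΓ : ContinuousOn Γ (Icc 0 T))
    (H Γ₀ : ℝ) (ε : ℝ) (hε : 0 < ε) (M : ℝ) (hM : 0 ≤ M) (c₀ : ℝ) (hc₀ : 0 ≤ c₀)
    (P K : ℝ → ℝ)
    (hPdiff : ∀ t ∈ Icc (0 : ℝ) T, DifferentiableAt ℝ P t)
    (hPT : P T = H) (hKT : K T = -H * Γ₀)
    (hPbd : ∀ t ∈ Icc (0 : ℝ) T, |P t| ≤ M)
    (hKbd : ∀ t ∈ Icc (0 : ℝ) T, |K t| ≤ M)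
    (hαbd : ∀ t ∈ Icc (0 : ℝ) T, ε ≤ |R t + P t * D t ^ 2|)
    (hKode : ∀ t ∈ Icc (0 : ℝ) T,
      HasDerivAt K
        (-(2 * A t * K t
          - K t * B t * (R t + P t * D t ^ 2)⁻¹
              * ((B t * P t + P t * C t * D t) + B t * K t)
          - (B t * P t + P t * C t * D t) * (R t + P t * D t ^ 2)⁻¹ * (B t * K t)
          - Q t * Γ t)) t) :
    ∃ c : ℝ, 0 ≤ c ∧
      ∀ N : ℕ, 1 ≤ N → ∀ PN KN : ℝ → ℝ,
        (∀ t ∈ Icc (0 : ℝ) T, DifferentiableAt ℝ PN t) →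
        KN T = -H * (1 - Γ₀ / (N : ℝ)) * Γ₀ →
        (∀ t ∈ Icc (0 : ℝ) T, |PN t| ≤ M) →
        (∀ t ∈ Icc (0 : ℝ) T, |KN t| ≤ M) →
        (∀ t ∈ Icc (0 : ℝ) T, ε ≤ |R t + (PN t + KN t / (N : ℝ)) * D t ^ 2|) →
        (∀ t ∈ Icc (0 : ℝ) T, |PN t - P t| ≤ c₀ / N) →
        (∀ t ∈ Icc (0 : ℝ) T,
          HasDerivAt KN
            (-(2 * A t * KN t
              - PN t * B t * (R t + (PN t + KN t / (N : ℝ)) * D t ^ 2)⁻¹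
                  * (B t * KN t)
              - KN t * B t * (R t + (PN t + KN t / (N : ℝ)) * D t ^ 2)⁻¹
                  * ((B t * PN t + (PN t + KN t / (N : ℝ)) * C t * D t) + B t * KN t)
              - C t * D t * (PN t + KN t / (N : ℝ))
                  * (R t + (PN t + KN t / (N : ℝ)) * D t ^ 2)⁻¹ * (B t * KN t)
              - (1 - Γ t / (N : ℝ)) * Q t * Γ t)) t) →
        ∀ t ∈ Icc (0 : ℝ) T, |KN t - K t| ≤ c / N := by
  classical
  -- uniform bound on the coefficient functions
  obtain ⟨L₀, hL₀1, hA', hB', hC', hD', hQ', hR', hΓ'⟩ :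
      ∃ L₀ : ℝ, 1 ≤ L₀ ∧ (∀ t ∈ Icc (0:ℝ) T, |A t| ≤ L₀) ∧ (∀ t ∈ Icc (0:ℝ) T, |B t| ≤ L₀)
        ∧ (∀ t ∈ Icc (0:ℝ) T, |C t| ≤ L₀) ∧ (∀ t ∈ Icc (0:ℝ) T, |D t| ≤ L₀)
        ∧ (∀ t ∈ Icc (0:ℝ) T, |Q t| ≤ L₀) ∧ (∀ t ∈ Icc (0:ℝ) T, |R t| ≤ L₀)
        ∧ (∀ t ∈ Icc (0:ℝ) T, |Γ t| ≤ L₀) := by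
    obtain ⟨CA, hCA⟩ := isCompact_Icc.exists_bound_of_continuousOn hA
    obtain ⟨CB, hCB⟩ := isCompact_Icc.exists_bound_of_continuousOn hB
    obtain ⟨CC', hCC⟩ := isCompact_Icc.exists_bound_of_continuousOn hC
    obtain ⟨CD', hCD⟩ := isCompact_Icc.exists_bound_of_continuousOn hD
    obtain ⟨CQ, hCQ⟩ := isCompact_Icc.exists_bound_of_continuousOn hQ
    obtain ⟨CR, hCR⟩ := isCompact_Icc.exists_bound_of_continuousOn hR
    obtain ⟨CΓ, hCΓ⟩ := isCompact_Icc.exists_bound_of_continuousOn hΓ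
    have habs : ∀ x : ℝ, 0 ≤ |x| := fun x => abs_nonneg x
    have h7 := habs CA; have h8 := habs CB; have h9 := habs CC'; have h10 := habs CD'
    have h11 := habs CQ; have h12 := habs CR; have h13 := habs CΓ
    refine ⟨1 + |CA| + |CB| + |CC'| + |CD'| + |CQ| + |CR| + |CΓ|, by linarith, ?_, ?_, ?_, ?_, ?_, ?_, ?_⟩ <;>
      intro t ht
    · have h1 := hCA t ht; rw [Real.norm_eq_abs] at h1
      have h2 : CA ≤ |CA| := le_abs_self _; linarith
    · have h1 := hCB t ht; rw [Real.norm_eq_abs] at h1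
      have h2 : CB ≤ |CB| := le_abs_self _; linarith
    · have h1 := hCC t ht; rw [Real.norm_eq_abs] at h1
      have h2 : CC' ≤ |CC'| := le_abs_self _; linarith
    · have h1 := hCD t ht; rw [Real.norm_eq_abs] at h1
      have h2 : CD' ≤ |CD'| := le_abs_self _; linarith
    · have h1 := hCQ t ht; rw [Real.norm_eq_abs] at h1
      have h2 : CQ ≤ |CQ| := le_abs_self _; linarith
    · have h1 := hCR t ht; rw [Real.norm_eq_abs] at h1
      have h2 : CR ≤ |CR| := le_abs_self _; linarith
    · have h1 := hCΓ t ht; rw [Real.norm_eq_abs] at h1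
      have h2 : CΓ ≤ |CΓ| := le_abs_self _; linarith
  have hL₀0 : (0:ℝ) < L₀ := lt_of_lt_of_le one_pos hL₀1
  have hεinv : (0:ℝ) < ε⁻¹ := by positivity
  -- a common bound Bd on all factors appearing in the products
  obtain ⟨Bd, hBd0, hL₀Bd, hMBd, hεiBd, hL₀M, hL₀2, h2M, hβNBd, hβBd⟩ :
      ∃ Bd : ℝ, 0 ≤ Bd ∧ L₀ ≤ Bd ∧ M ≤ Bd ∧ ε⁻¹ ≤ Bd ∧ L₀*M ≤ Bd ∧ L₀^2 ≤ Bd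
        ∧ 2*M ≤ Bd ∧ 2*(L₀*M) + 2*M*L₀^2 ≤ Bd ∧ 2*(L₀*M) + M*L₀^2 ≤ Bd := by
    obtain ⟨s, hsdef⟩ : ∃ s : ℝ, s = L₀ + M + ε⁻¹ := ⟨_, rfl⟩
    have hs1 : (1:ℝ) ≤ s := by rw [hsdef]; linarith
    have hLs : L₀ ≤ s := by rw [hsdef]; linarith
    have hMs : M ≤ s := by rw [hsdef]; linarith
    have hεs : ε⁻¹ ≤ s := by rw [hsdef]; linarith
    have hs0 : (0:ℝ) < s := lt_of_lt_of_le one_pos hs1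
    have hss2 : s^2 ≤ s^4 := pow_le_pow_right₀ hs1 (by norm_num)
    have hss3 : s^3 ≤ s^4 := pow_le_pow_right₀ hs1 (by norm_num)
    have hss1 : s ≤ s^4 := le_self_pow₀ hs1 (by norm_num)
    have hs40 : (0:ℝ) < s^4 := by positivity
    refine ⟨4*s^4, by positivity, ?_, ?_, ?_, ?_, ?_, ?_, ?_, ?_⟩
    · linarith
    · linarith
    · linarith
    · nlinarith
    · nlinarith
    · nlinarith
    · have h5 : L₀*M ≤ s^2 := by nlinarith
      have h6 : 2*M*L₀^2 ≤ 2*s^3 := by nlinarith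
      nlinarith
    · have h5 : L₀*M ≤ s^2 := by nlinarith
      have h6 : M*L₀^2 ≤ s^3 := by nlinarith
      nlinarith
  have hBd3 : (0:ℝ) ≤ Bd^3 := by positivity
  -- a common bound D₀ on the O(1/N) perturbations
  obtain ⟨D₀, hD₀0, hD₀1, hD₀2, hD₀3, hD₀4⟩ :
      ∃ D₀ : ℝ, 0 ≤ D₀ ∧ c₀ ≤ D₀ ∧ c₀ + M ≤ D₀ ∧ (c₀+M)*L₀^2/ε^2 ≤ D₀
        ∧ L₀*c₀ + (c₀+M)*L₀^2 ≤ D₀ := by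
    have hq : (0:ℝ) ≤ L₀^2/ε^2 := by positivity
    have hL2 : (0:ℝ) ≤ L₀^2 := by positivity
    refine ⟨(c₀ + M) * (1 + L₀^2/ε^2 + L₀ + L₀^2), by positivity, ?_, ?_, ?_, ?_⟩
    · nlinarith
    · nlinarith
    · have : (c₀+M)*L₀^2/ε^2 = (c₀+M)*(L₀^2/ε^2) := by ring
      rw [this]; nlinarith
    · nlinarith
  obtain ⟨Lc, hLcdef⟩ : ∃ Lc : ℝ, Lc = 2*L₀ + Bd^3*(3*L₀+1) := ⟨_, rfl⟩
  have hLc0 : (0:ℝ) < Lc := by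
    have h1 : (0:ℝ) ≤ Bd^3*(3*L₀+1) := mul_nonneg hBd3 (by linarith)
    rw [hLcdef]; linarith
  obtain ⟨Cst, hCstdef⟩ : ∃ Cst : ℝ, Cst = 6*Bd^3*D₀ + L₀^3 := ⟨_, rfl⟩
  have hCst0 : (0:ℝ) ≤ Cst := by
    have h1 : (0:ℝ) ≤ 6*Bd^3*D₀ := by
      have := mul_nonneg hBd3 hD₀0; linarith
    have h2 : (0:ℝ) ≤ L₀^3 := by positivity
    rw [hCstdef]; linarith
  have hcpos : (0:ℝ) ≤ (|H| * Γ₀^2 + Cst/Lc) * Real.exp (Lc*T) := by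
    have h1 : (0:ℝ) ≤ Cst/Lc := div_nonneg hCst0 hLc0.le
    have h2 : (0:ℝ) ≤ |H| * Γ₀^2 := by positivity
    exact mul_nonneg (by linarith) (Real.exp_pos _).le
  refine ⟨(|H| * Γ₀^2 + Cst/Lc) * Real.exp (Lc*T), hcpos, ?_⟩
  intro N hN PN KN hPNdiff hKNT hPNbd hKNbd hαNbd hPNP hKNode t ht
  have hN1 : (1:ℝ) ≤ (N:ℝ) := by exact_mod_cast hN
  have hNpos : (0:ℝ) < (N:ℝ) := lt_of_lt_of_le one_pos hN1
  -- the key pointwise estimate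
  have key : ∀ u ∈ Icc (0:ℝ) T,
      |(-(2 * A u * KN u
          - PN u * B u * (R u + (PN u + KN u / (N : ℝ)) * D u ^ 2)⁻¹ * (B u * KN u)
          - KN u * B u * (R u + (PN u + KN u / (N : ℝ)) * D u ^ 2)⁻¹
              * ((B u * PN u + (PN u + KN u / (N : ℝ)) * C u * D u) + B u * KN u)
          - C u * D u * (PN u + KN u / (N : ℝ))
              * (R u + (PN u + KN u / (N : ℝ)) * D u ^ 2)⁻¹ * (B u * KN u)
          - (1 - Γ u / (N : ℝ)) * Q u * Γ u))
        - (-(2 * A u * K u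
          - K u * B u * (R u + P u * D u ^ 2)⁻¹ * ((B u * P u + P u * C u * D u) + B u * K u)
          - (B u * P u + P u * C u * D u) * (R u + P u * D u ^ 2)⁻¹ * (B u * K u)
          - Q u * Γ u))| ≤ Lc * |KN u - K u| + Cst / N := by
    intro u hu
    have h := key_est (A u) (B u) (C u) (D u) (Q u) (R u) (Γ u) (P u) (K u) (PN u) (KN u)
      (R u + P u * D u ^ 2) (R u + (PN u + KN u / (N:ℝ)) * D u ^ 2) (N:ℝ) ε M c₀ L₀ Bd D₀
      hε hM hc₀ hL₀1 hN1 rfl rfl (hαbd u hu) (hαNbd u hu)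
      (hA' u hu) (hB' u hu) (hC' u hu) (hD' u hu) (hQ' u hu) (hR' u hu) (hΓ' u hu)
      (hPbd u hu) (hKbd u hu) (hPNbd u hu) (hKNbd u hu) (hPNP u hu)
      hBd0 hL₀Bd hMBd hεiBd hL₀M hL₀2 h2M hβNBd hβBd hD₀0 hD₀1 hD₀2 hD₀3 hD₀4
    rw [hLcdef, hCstdef]
    exact h
  -- set up the time-reversed function and apply Grönwall
  have hKode' : ∀ u ∈ Icc (0:ℝ) T, HasDerivAt (fun v => KN v - K v)
      ((-(2 * A u * KN u
          - PN u * B u * (R u + (PN u + KN u / (N : ℝ)) * D u ^ 2)⁻¹ * (B u * KN u)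
          - KN u * B u * (R u + (PN u + KN u / (N : ℝ)) * D u ^ 2)⁻¹
              * ((B u * PN u + (PN u + KN u / (N : ℝ)) * C u * D u) + B u * KN u)
          - C u * D u * (PN u + KN u / (N : ℝ))
              * (R u + (PN u + KN u / (N : ℝ)) * D u ^ 2)⁻¹ * (B u * KN u)
          - (1 - Γ u / (N : ℝ)) * Q u * Γ u))
        - (-(2 * A u * K u
          - K u * B u * (R u + P u * D u ^ 2)⁻¹ * ((B u * P u + P u * C u * D u) + B u * K u)
          - (B u * P u + P u * C u * D u) * (R u + P u * D u ^ 2)⁻¹ * (B u * K u)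
          - Q u * Γ u))) u :=
    fun u hu => (hKNode u hu).sub (hKode u hu)
  obtain ⟨g, hgdef⟩ : ∃ g : ℝ → ℝ, g = fun x => KN (T - x) - K (T - x) := ⟨_, rfl⟩
  have hmem : ∀ x ∈ Icc (0:ℝ) T, T - x ∈ Icc (0:ℝ) T := by
    intro x hx; exact ⟨by linarith [hx.2], by linarith [hx.1]⟩
  have hgd : ∀ x ∈ Icc (0:ℝ) T, HasDerivAt g
      (-((-(2 * A (T-x) * KN (T-x)
          - PN (T-x) * B (T-x) * (R (T-x) + (PN (T-x) + KN (T-x) / (N : ℝ)) * D (T-x) ^ 2)⁻¹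
            * (B (T-x) * KN (T-x))
          - KN (T-x) * B (T-x) * (R (T-x) + (PN (T-x) + KN (T-x) / (N : ℝ)) * D (T-x) ^ 2)⁻¹
              * ((B (T-x) * PN (T-x) + (PN (T-x) + KN (T-x) / (N : ℝ)) * C (T-x) * D (T-x))
                  + B (T-x) * KN (T-x))
          - C (T-x) * D (T-x) * (PN (T-x) + KN (T-x) / (N : ℝ))
              * (R (T-x) + (PN (T-x) + KN (T-x) / (N : ℝ)) * D (T-x) ^ 2)⁻¹
                * (B (T-x) * KN (T-x))
          - (1 - Γ (T-x) / (N : ℝ)) * Q (T-x) * Γ (T-x)))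
        - (-(2 * A (T-x) * K (T-x)
          - K (T-x) * B (T-x) * (R (T-x) + P (T-x) * D (T-x) ^ 2)⁻¹
              * ((B (T-x) * P (T-x) + P (T-x) * C (T-x) * D (T-x)) + B (T-x) * K (T-x))
          - (B (T-x) * P (T-x) + P (T-x) * C (T-x) * D (T-x))
              * (R (T-x) + P (T-x) * D (T-x) ^ 2)⁻¹ * (B (T-x) * K (T-x))
          - Q (T-x) * Γ (T-x))))) x := by
    intro x hx
    have h1 := hKode' (T - x) (hmem x hx)
    have h2 : HasDerivAt (fun y : ℝ => T - y) (-1) x := by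
      simpa using (hasDerivAt_id x).const_sub T
    have h3 := h1.comp x h2
    rw [hgdef]
    refine h3.congr_deriv ?_
    ring
  have hgc : ContinuousOn g (Icc 0 T) :=
    fun x hx => (hgd x hx).continuousAt.continuousWithinAt
  have hg0 : ‖g 0‖ ≤ (|H| * Γ₀^2)/N := by
    have : g 0 = KN T - K T := by rw [hgdef]; simp
    rw [this, hKNT, hKT, Real.norm_eq_abs]
    have heq : -H * (1 - Γ₀ / (N:ℝ)) * Γ₀ - (-H * Γ₀) = H * Γ₀^2 / N := by
      field_simp; ring
    rw [heq, abs_div, abs_mul, abs_of_pos hNpos, abs_pow]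
    rw [sq_abs]
  have hbound : ∀ x ∈ Ico (0:ℝ) T, ‖(fun x =>
      -((-(2 * A (T-x) * KN (T-x)
          - PN (T-x) * B (T-x) * (R (T-x) + (PN (T-x) + KN (T-x) / (N : ℝ)) * D (T-x) ^ 2)⁻¹
            * (B (T-x) * KN (T-x))
          - KN (T-x) * B (T-x) * (R (T-x) + (PN (T-x) + KN (T-x) / (N : ℝ)) * D (T-x) ^ 2)⁻¹
              * ((B (T-x) * PN (T-x) + (PN (T-x) + KN (T-x) / (N : ℝ)) * C (T-x) * D (T-x))
                  + B (T-x) * KN (T-x))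
          - C (T-x) * D (T-x) * (PN (T-x) + KN (T-x) / (N : ℝ))
              * (R (T-x) + (PN (T-x) + KN (T-x) / (N : ℝ)) * D (T-x) ^ 2)⁻¹
                * (B (T-x) * KN (T-x))
          - (1 - Γ (T-x) / (N : ℝ)) * Q (T-x) * Γ (T-x)))
        - (-(2 * A (T-x) * K (T-x)
          - K (T-x) * B (T-x) * (R (T-x) + P (T-x) * D (T-x) ^ 2)⁻¹
              * ((B (T-x) * P (T-x) + P (T-x) * C (T-x) * D (T-x)) + B (T-x) * K (T-x))
          - (B (T-x) * P (T-x) + P (T-x) * C (T-x) * D (T-x))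
              * (R (T-x) + P (T-x) * D (T-x) ^ 2)⁻¹ * (B (T-x) * K (T-x))
          - Q (T-x) * Γ (T-x))))) x‖ ≤ Lc * ‖g x‖ + Cst/N := by
    intro x hx
    have hm := hmem x (Ico_subset_Icc_self hx)
    have hk := key (T - x) hm
    rw [Real.norm_eq_abs, Real.norm_eq_abs, hgdef]
    rw [abs_neg]
    exact hk
  have hgron := norm_le_gronwallBound_of_norm_deriv_right_le hgc
    (fun x hx => (hgd x (Ico_subset_Icc_self hx)).hasDerivWithinAt) hg0 hbound
  have hx : T - t ∈ Icc (0:ℝ) T := hmem t ht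
  have hgt := hgron (T - t) hx
  have hgval : g (T - t) = KN t - K t := by rw [hgdef]; simp
  rw [hgval, Real.norm_eq_abs] at hgt
  refine hgt.trans ?_
  rw [gronwallBound_of_K_ne_0 hLc0.ne']
  have hxT : T - t - 0 ≤ T := by simp; linarith [ht.1]
  have he1 : Real.exp (Lc * (T - t - 0)) ≤ Real.exp (Lc * T) := by
    apply Real.exp_le_exp.mpr
    exact mul_le_mul_of_nonneg_left hxT hLc0.le
  have he0 : (0:ℝ) < Real.exp (Lc * (T - t - 0)) := Real.exp_pos _
  have hc1 : (0:ℝ) ≤ |H| * Γ₀^2/N := by positivity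
  have hc2 : (0:ℝ) ≤ Cst/N/Lc := by positivity
  calc |H| * Γ₀^2/N * Real.exp (Lc * (T - t - 0))
        + Cst/N/Lc * (Real.exp (Lc * (T - t - 0)) - 1)
      ≤ |H| * Γ₀^2/N * Real.exp (Lc * T) + Cst/N/Lc * Real.exp (Lc * T) := by
        have b1 : |H| * Γ₀^2/N * Real.exp (Lc * (T - t - 0))
            ≤ |H| * Γ₀^2/N * Real.exp (Lc * T) := mul_le_mul_of_nonneg_left he1 hc1
        have b2 : Cst/N/Lc * (Real.exp (Lc * (T - t - 0)) - 1)
            ≤ Cst/N/Lc * Real.exp (Lc * T) :=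
          mul_le_mul_of_nonneg_left (by linarith) hc2
        linarith
    _ = (|H| * Γ₀^2 + Cst/Lc) * Real.exp (Lc*T) / N := by ring
end

section
/- Let T > 0, let A, B, C, D, f, g, Q, R, Γ, η : ℝ → ℝ be continuous on [0,T], let H, Γ₀, η₀ ∈ ℝ, and fix ε > 0, M ≥ 0, c₀ ≥ 0. Suppose P, K, φ : ℝ → ℝ are differentiable on [0,T] with |P|, |K|, |φ| ≤ M, |α| ≥ ε on [0,T], φ(T) = −H·η₀, where α := R + PD², β := BP + PCD, δ := Bφ + PgD, and φ'(t) + f(t)P(t) + f(t)K(t) + A(t)φ(t) + C(t)P(t)g(t) − K(t)B(t)α(t)⁻¹δ(t) − β(t)α(t)⁻¹δ(t) − Q(t)η(t) = 0 on [0,T]. Then there exists c ≥ 0 such that for every natural number N ≥ 1 and all differentiable P_N, K_N, φ_N : ℝ → ℝ on [0,T] with |P_N|, |K_N|, |φ_N| ≤ M, |α_N| ≥ ε on [0,T] (where α_N := R + (P_N + K_N/N)D², β_N := BP_N + (P_N + K_N/N)CD, δ_N := Bφ_N + (P_N + K_N/N)gD), φ_N(T) = −H(1 − Γ₀/N)η₀,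 sup_{[0,T]}|P_N − P| ≤ c₀/N, sup_{[0,T]}|K_N − K| ≤ c₀/N, and φ_N'(t) + f(t)P_N(t) + f(t)K_N(t) + A(t)φ_N(t) − P_N(t)B(t)α_N(t)⁻¹δ_N(t) − K_N(t)B(t)α_N(t)⁻¹δ_N(t) + C(t)(P_N(t) + K_N(t)/N)(g(t) − D(t)α_N(t)⁻¹δ_N(t)) − (1 − Γ(t)/N)Q(t)η(t) = 0 on [0,T], one has sup_{t∈[0,T]} |φ_N(t) − φ(t)| ≤ c/N. -/
open Set Real

private lemma abs_add8 (p1 p2 p3 p4 p5 p6 p7 p8 : ℝ) :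
    |p1 + p2 + p3 + p4 + p5 + p6 + p7 + p8| ≤
      |p1| + |p2| + |p3| + |p4| + |p5| + |p6| + |p7| + |p8| := by
  calc |p1 + p2 + p3 + p4 + p5 + p6 + p7 + p8|
      ≤ |p1 + p2 + p3 + p4 + p5 + p6 + p7| + |p8| := abs_add_le _ _
    _ ≤ |p1 + p2 + p3 + p4 + p5 + p6| + |p7| + |p8| := by gcongr; exact abs_add_le _ _
    _ ≤ |p1 + p2 + p3 + p4 + p5| + |p6| + |p7| + |p8| := by gcongr; exact abs_add_le _ _
    _ ≤ |p1 + p2 + p3 + p4| + |p5| + |p6| + |p7| + |p8| := by gcongr; exact abs_add_le _ _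
    _ ≤ |p1 + p2 + p3| + |p4| + |p5| + |p6| + |p7| + |p8| := by gcongr; exact abs_add_le _ _
    _ ≤ |p1 + p2| + |p3| + |p4| + |p5| + |p6| + |p7| + |p8| := by gcongr; exact abs_add_le _ _
    _ ≤ |p1| + |p2| + |p3| + |p4| + |p5| + |p6| + |p7| + |p8| := by gcongr; exact abs_add_le _ _

set_option maxHeartbeats 2000000 in
private lemma key_est_s16 (Mb M ε c₀ n : ℝ) (hMb : 1 ≤ Mb) (hM : 0 ≤ M) (hε : 0 < ε)
    (hc₀ : 0 ≤ c₀) (hn : 1 ≤ n)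
    (a b c d f g q r γ e p k x pn kn xn : ℝ)
    (ha : |a| ≤ Mb) (hb : |b| ≤ Mb) (hc : |c| ≤ Mb) (hd : |d| ≤ Mb) (hf : |f| ≤ Mb)
    (hg : |g| ≤ Mb) (hq : |q| ≤ Mb) (hγ : |γ| ≤ Mb) (he : |e| ≤ Mb)
    (hp : |p| ≤ M) (hk : |k| ≤ M) (hx : |x| ≤ M) (hpn : |pn| ≤ M) (hkn : |kn| ≤ M)
    (hxn : |xn| ≤ M)
    (hα : ε ≤ |r + p * d ^ 2|) (hαn : ε ≤ |r + (pn + kn / n) * d ^ 2|)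
    (hdp : |pn - p| ≤ c₀ / n) (hdk : |kn - k| ≤ c₀ / n) :
    |(f * pn + f * kn + a * xn
        - pn * b * (r + (pn + kn / n) * d ^ 2)⁻¹ * (b * xn + (pn + kn / n) * g * d)
        - kn * b * (r + (pn + kn / n) * d ^ 2)⁻¹ * (b * xn + (pn + kn / n) * g * d)
        + c * (pn + kn / n)
            * (g - d * (r + (pn + kn / n) * d ^ 2)⁻¹ * (b * xn + (pn + kn / n) * g * d))
        - (1 - γ / n) * q * e)
      - (f * p + f * k + a * x + c * p * g
        - k * b * (r + p * d ^ 2)⁻¹ * (b * x + p * g * d)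
        - (b * p + p * c * d) * (r + p * d ^ 2)⁻¹ * (b * x + p * g * d)
        - q * e)|
    ≤ (Mb + 2 * (Mb * (M * Mb / ε)) + Mb * Mb * (M * Mb / ε)) * |xn - x| +
      (2 * (Mb * c₀) + Mb * Mb * (c₀ + M) + Mb ^ 3
        + 2 * (Mb * (c₀ * (3 * M * Mb ^ 2) / ε
            + M * (Mb ^ 2 * (c₀ + M)) * (3 * M * Mb ^ 2) / ε ^ 2
            + M * (Mb ^ 2 * (c₀ + M)) / ε))
        + Mb * Mb * ((c₀ + M) * (3 * M * Mb ^ 2) / ε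
            + M * (Mb ^ 2 * (c₀ + M)) * (3 * M * Mb ^ 2) / ε ^ 2
            + M * (Mb ^ 2 * (c₀ + M)) / ε)) / n := by
  have hn0 : (0 : ℝ) < n := lt_of_lt_of_le one_pos hn
  have hMb0 : (0 : ℝ) ≤ Mb := le_trans zero_le_one hMb
  set α : ℝ := r + p * d ^ 2 with hαdef
  set αn : ℝ := r + (pn + kn / n) * d ^ 2 with hαndef
  set δ0 : ℝ := b * x + p * g * d with hδ0def
  set δn : ℝ := b * xn + (pn + kn / n) * g * d with hδndef
  have hα0 : α ≠ 0 := by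
    intro h; rw [h] at hα; simp at hα; linarith
  have hαn0 : αn ≠ 0 := by
    intro h; rw [h] at hαn; simp at hαn; linarith
  have hiα : |α⁻¹| ≤ ε⁻¹ := by rw [abs_inv]; exact inv_anti₀ hε hα
  have hiαn : |αn⁻¹| ≤ ε⁻¹ := by rw [abs_inv]; exact inv_anti₀ hε hαn
  have hkn' : |kn / n| ≤ M / n := by
    rw [abs_div, abs_of_pos hn0]; exact (div_le_div_iff_of_pos_right hn0).2 hkn
  have hsub : |pn + kn / n - p| ≤ (c₀ + M) / n := by
    calc |pn + kn / n - p| = |(pn - p) + kn / n| := by ring_nf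
      _ ≤ |pn - p| + |kn / n| := abs_add_le _ _
      _ ≤ c₀ / n + M / n := add_le_add hdp hkn'
      _ = (c₀ + M) / n := by ring
  have hsub0 : (0:ℝ) ≤ c₀ + M := by linarith
  have hd2 : |d| ^ 2 ≤ Mb ^ 2 := by have := abs_nonneg d; nlinarith
  have hαdiff : |αn - α| ≤ Mb ^ 2 * (c₀ + M) / n := by
    have hrw : αn - α = (pn + kn / n - p) * d ^ 2 := by rw [hαndef, hαdef]; ring
    calc |αn - α| = |pn + kn / n - p| * |d| ^ 2 := by
          rw [hrw, abs_mul, abs_pow]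
      _ ≤ ((c₀ + M) / n) * Mb ^ 2 :=
          mul_le_mul hsub hd2 (by positivity) (by positivity)
      _ = Mb ^ 2 * (c₀ + M) / n := by ring
  have hinvdiff : |αn⁻¹ - α⁻¹| ≤ (Mb ^ 2 * (c₀ + M) / ε ^ 2) / n := by
    have hrw : αn⁻¹ - α⁻¹ = (α - αn) * αn⁻¹ * α⁻¹ := by field_simp
    calc |αn⁻¹ - α⁻¹| = |α - αn| * |αn⁻¹| * |α⁻¹| := by rw [hrw, abs_mul, abs_mul]
      _ ≤ (Mb ^ 2 * (c₀ + M) / n) * ε⁻¹ * ε⁻¹ := by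
          have h1 : |α - αn| ≤ Mb ^ 2 * (c₀ + M) / n := by rw [abs_sub_comm]; exact hαdiff
          exact mul_le_mul (mul_le_mul h1 hiαn (abs_nonneg _) (by positivity)) hiα
            (abs_nonneg _) (by positivity)
      _ = (Mb ^ 2 * (c₀ + M) / ε ^ 2) / n := by ring
  have hδ0bd : |δ0| ≤ 3 * M * Mb ^ 2 := by
    calc |δ0| ≤ |b * x| + |p * g * d| := abs_add_le _ _
      _ = |b| * |x| + |p| * |g| * |d| := by rw [abs_mul, abs_mul, abs_mul]
      _ ≤ Mb * M + M * Mb * Mb := by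
          refine add_le_add (mul_le_mul hb hx (abs_nonneg _) hMb0) ?_
          exact mul_le_mul (mul_le_mul hp hg (abs_nonneg _) hM) hd (abs_nonneg _)
            (by positivity)
      _ ≤ 3 * M * Mb ^ 2 := by nlinarith [mul_le_mul_of_nonneg_left hMb (mul_nonneg hM hMb0), mul_nonneg (mul_nonneg hM hMb0) hMb0]
  have h2M : |pn + kn / n| ≤ 2 * M := by
    calc |pn + kn / n| ≤ |pn| + |kn / n| := abs_add_le _ _
      _ ≤ M + M / n := add_le_add hpn hkn'
      _ ≤ 2 * M := by
          have : M / n ≤ M := by rw [div_le_iff₀ hn0]; nlinarith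
          linarith
  have hδnbd : |δn| ≤ 3 * M * Mb ^ 2 := by
    calc |δn| ≤ |b * xn| + |(pn + kn / n) * g * d| := abs_add_le _ _
      _ = |b| * |xn| + |pn + kn / n| * |g| * |d| := by rw [abs_mul, abs_mul, abs_mul]
      _ ≤ Mb * M + (2 * M) * Mb * Mb := by
          refine add_le_add (mul_le_mul hb hxn (abs_nonneg _) hMb0) ?_
          exact mul_le_mul (mul_le_mul h2M hg (abs_nonneg _) (by positivity)) hd
            (abs_nonneg _) (by positivity)
      _ ≤ 3 * M * Mb ^ 2 := by nlinarith [mul_le_mul_of_nonneg_left hMb (mul_nonneg hM hMb0), mul_nonneg (mul_nonneg hM hMb0) hMb0]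
  have hδdiff : |δn - δ0| ≤ Mb * |xn - x| + Mb ^ 2 * (c₀ + M) / n := by
    have hrw : δn - δ0 = b * (xn - x) + (pn + kn / n - p) * (g * d) := by
      rw [hδndef, hδ0def]; ring
    calc |δn - δ0| ≤ |b * (xn - x)| + |(pn + kn / n - p) * (g * d)| := by
          rw [hrw]; exact abs_add_le _ _
      _ = |b| * |xn - x| + |pn + kn / n - p| * (|g| * |d|) := by
          rw [abs_mul, abs_mul, abs_mul]
      _ ≤ Mb * |xn - x| + ((c₀ + M) / n) * (Mb * Mb) := by
          refine add_le_add (mul_le_mul_of_nonneg_right hb (abs_nonneg _)) ?_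
          exact mul_le_mul hsub (mul_le_mul hg hd (abs_nonneg _) hMb0) (by positivity)
            (by positivity)
      _ = Mb * |xn - x| + Mb ^ 2 * (c₀ + M) / n := by ring
  have brk : ∀ u v V W : ℝ, 0 ≤ V → 0 ≤ W → |u - v| ≤ W / n → |v| ≤ V →
      |u * αn⁻¹ * δn - v * α⁻¹ * δ0| ≤
        V * Mb / ε * |xn - x| + (W * (3 * M * Mb ^ 2) / ε
          + V * (Mb ^ 2 * (c₀ + M)) * (3 * M * Mb ^ 2) / ε ^ 2
          + V * (Mb ^ 2 * (c₀ + M)) / ε) / n := by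
    intro u v V W hV hW huv hv
    have hdec : u * αn⁻¹ * δn - v * α⁻¹ * δ0 =
        (u - v) * αn⁻¹ * δn + v * (αn⁻¹ - α⁻¹) * δn + v * α⁻¹ * (δn - δ0) := by ring
    calc |u * αn⁻¹ * δn - v * α⁻¹ * δ0|
        = |(u - v) * αn⁻¹ * δn + v * (αn⁻¹ - α⁻¹) * δn + v * α⁻¹ * (δn - δ0)| := by
          rw [hdec]
      _ ≤ |(u - v) * αn⁻¹ * δn| + |v * (αn⁻¹ - α⁻¹) * δn| + |v * α⁻¹ * (δn - δ0)| :=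
          abs_add_three _ _ _
      _ = |u - v| * |αn⁻¹| * |δn| + |v| * |αn⁻¹ - α⁻¹| * |δn|
            + |v| * |α⁻¹| * |δn - δ0| := by
          rw [abs_mul, abs_mul, abs_mul, abs_mul, abs_mul, abs_mul]
      _ ≤ (W / n) * ε⁻¹ * (3 * M * Mb ^ 2)
            + V * ((Mb ^ 2 * (c₀ + M) / ε ^ 2) / n) * (3 * M * Mb ^ 2)
            + V * ε⁻¹ * (Mb * |xn - x| + Mb ^ 2 * (c₀ + M) / n) := by
          gcongr <;> positivity
      _ = V * Mb / ε * |xn - x| + (W * (3 * M * Mb ^ 2) / ε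
            + V * (Mb ^ 2 * (c₀ + M)) * (3 * M * Mb ^ 2) / ε ^ 2
            + V * (Mb ^ 2 * (c₀ + M)) / ε) / n := by
          field_simp; ring
  have hdecomp :
      (f * pn + f * kn + a * xn
        - pn * b * αn⁻¹ * δn - kn * b * αn⁻¹ * δn
        + c * (pn + kn / n) * (g - d * αn⁻¹ * δn)
        - (1 - γ / n) * q * e)
      - (f * p + f * k + a * x + c * p * g
        - k * b * α⁻¹ * δ0 - (b * p + p * c * d) * α⁻¹ * δ0 - q * e)
      = f * (pn - p) + f * (kn - k) + a * (xn - x)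
        + -(b * (pn * αn⁻¹ * δn - p * α⁻¹ * δ0))
        + -(b * (kn * αn⁻¹ * δn - k * α⁻¹ * δ0))
        + c * g * (pn + kn / n - p)
        + -(c * d * ((pn + kn / n) * αn⁻¹ * δn - p * α⁻¹ * δ0))
        + γ / n * (q * e) := by ring
  have h1 : |f * (pn - p)| ≤ Mb * (c₀ / n) := by
    rw [abs_mul]; exact mul_le_mul hf hdp (abs_nonneg _) hMb0
  have h2 : |f * (kn - k)| ≤ Mb * (c₀ / n) := by
    rw [abs_mul]; exact mul_le_mul hf hdk (abs_nonneg _) hMb0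
  have h3 : |a * (xn - x)| ≤ Mb * |xn - x| := by
    rw [abs_mul]; exact mul_le_mul_of_nonneg_right ha (abs_nonneg _)
  have h4 : |-(b * (pn * αn⁻¹ * δn - p * α⁻¹ * δ0))| ≤
      Mb * (M * Mb / ε * |xn - x| + (c₀ * (3 * M * Mb ^ 2) / ε
        + M * (Mb ^ 2 * (c₀ + M)) * (3 * M * Mb ^ 2) / ε ^ 2
        + M * (Mb ^ 2 * (c₀ + M)) / ε) / n) := by
    rw [abs_neg, abs_mul]
    exact mul_le_mul hb (brk pn p M c₀ hM hc₀ hdp hp) (abs_nonneg _) hMb0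
  have h5 : |-(b * (kn * αn⁻¹ * δn - k * α⁻¹ * δ0))| ≤
      Mb * (M * Mb / ε * |xn - x| + (c₀ * (3 * M * Mb ^ 2) / ε
        + M * (Mb ^ 2 * (c₀ + M)) * (3 * M * Mb ^ 2) / ε ^ 2
        + M * (Mb ^ 2 * (c₀ + M)) / ε) / n) := by
    rw [abs_neg, abs_mul]
    exact mul_le_mul hb (brk kn k M c₀ hM hc₀ hdk hk) (abs_nonneg _) hMb0
  have h6 : |c * g * (pn + kn / n - p)| ≤ Mb * Mb * ((c₀ + M) / n) := by
    rw [abs_mul, abs_mul]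
    exact mul_le_mul (mul_le_mul hc hg (abs_nonneg _) hMb0) hsub (abs_nonneg _)
      (by positivity)
  have h7 : |-(c * d * ((pn + kn / n) * αn⁻¹ * δn - p * α⁻¹ * δ0))| ≤
      Mb * Mb * (M * Mb / ε * |xn - x| + ((c₀ + M) * (3 * M * Mb ^ 2) / ε
        + M * (Mb ^ 2 * (c₀ + M)) * (3 * M * Mb ^ 2) / ε ^ 2
        + M * (Mb ^ 2 * (c₀ + M)) / ε) / n) := by
    rw [abs_neg, abs_mul, abs_mul]
    exact mul_le_mul (mul_le_mul hc hd (abs_nonneg _) hMb0)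
      (brk (pn + kn / n) p M (c₀ + M) hM hsub0 hsub hp) (abs_nonneg _) (by positivity)
  have h8 : |γ / n * (q * e)| ≤ Mb / n * (Mb * Mb) := by
    rw [abs_mul, abs_mul, abs_div, abs_of_pos hn0]
    exact mul_le_mul ((div_le_div_iff_of_pos_right hn0).2 hγ)
      (mul_le_mul hq he (abs_nonneg _) hMb0) (by positivity) (by positivity)
  calc |(f * pn + f * kn + a * xn
        - pn * b * αn⁻¹ * δn - kn * b * αn⁻¹ * δn
        + c * (pn + kn / n) * (g - d * αn⁻¹ * δn)
        - (1 - γ / n) * q * e)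
      - (f * p + f * k + a * x + c * p * g
        - k * b * α⁻¹ * δ0 - (b * p + p * c * d) * α⁻¹ * δ0 - q * e)|
      = |f * (pn - p) + f * (kn - k) + a * (xn - x)
        + -(b * (pn * αn⁻¹ * δn - p * α⁻¹ * δ0))
        + -(b * (kn * αn⁻¹ * δn - k * α⁻¹ * δ0))
        + c * g * (pn + kn / n - p)
        + -(c * d * ((pn + kn / n) * αn⁻¹ * δn - p * α⁻¹ * δ0))
        + γ / n * (q * e)| := by rw [hdecomp]
    _ ≤ |f * (pn - p)| + |f * (kn - k)| + |a * (xn - x)|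
        + |-(b * (pn * αn⁻¹ * δn - p * α⁻¹ * δ0))|
        + |-(b * (kn * αn⁻¹ * δn - k * α⁻¹ * δ0))|
        + |c * g * (pn + kn / n - p)|
        + |-(c * d * ((pn + kn / n) * αn⁻¹ * δn - p * α⁻¹ * δ0))|
        + |γ / n * (q * e)| := abs_add8 _ _ _ _ _ _ _ _
    _ ≤ Mb * (c₀ / n) + Mb * (c₀ / n) + Mb * |xn - x|
        + Mb * (M * Mb / ε * |xn - x| + (c₀ * (3 * M * Mb ^ 2) / ε
            + M * (Mb ^ 2 * (c₀ + M)) * (3 * M * Mb ^ 2) / ε ^ 2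
            + M * (Mb ^ 2 * (c₀ + M)) / ε) / n)
        + Mb * (M * Mb / ε * |xn - x| + (c₀ * (3 * M * Mb ^ 2) / ε
            + M * (Mb ^ 2 * (c₀ + M)) * (3 * M * Mb ^ 2) / ε ^ 2
            + M * (Mb ^ 2 * (c₀ + M)) / ε) / n)
        + Mb * Mb * ((c₀ + M) / n)
        + Mb * Mb * (M * Mb / ε * |xn - x| + ((c₀ + M) * (3 * M * Mb ^ 2) / ε
            + M * (Mb ^ 2 * (c₀ + M)) * (3 * M * Mb ^ 2) / ε ^ 2
            + M * (Mb ^ 2 * (c₀ + M)) / ε) / n)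
        + Mb / n * (Mb * Mb) := by
          linarith
    _ = (Mb + 2 * (Mb * (M * Mb / ε)) + Mb * Mb * (M * Mb / ε)) * |xn - x| +
      (2 * (Mb * c₀) + Mb * Mb * (c₀ + M) + Mb ^ 3
        + 2 * (Mb * (c₀ * (3 * M * Mb ^ 2) / ε
            + M * (Mb ^ 2 * (c₀ + M)) * (3 * M * Mb ^ 2) / ε ^ 2
            + M * (Mb ^ 2 * (c₀ + M)) / ε))
        + Mb * Mb * ((c₀ + M) * (3 * M * Mb ^ 2) / ε
            + M * (Mb ^ 2 * (c₀ + M)) * (3 * M * Mb ^ 2) / ε ^ 2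
            + M * (Mb ^ 2 * (c₀ + M)) / ε)) / n := by ring

/-- Continuous dependence on `1/N` for the offset function: given that `P_N` and `K_N`
are within `c₀/N` of `P` and `K` in supremum norm and `|α_N|, |α| ≥ ε`, the solution
`φ_N` of the `N`-dependent linear backward ODE is within `O(1/N)` of the solution `φ`
of the limiting linear backward ODE in supremum norm on `[0,T]`. -/
theorem stmt_16 (T : ℝ) (hT : 0 < T)
    (A B C D f g Q R Γ η : ℝ → ℝ)
    (hA : ContinuousOn A (Icc 0 T)) (hB : ContinuousOn B (Icc 0 T))
    (hC : ContinuousOn C (Icc 0 T)) (hD : ContinuousOn D (Icc 0 T))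
    (hf : ContinuousOn f (Icc 0 T)) (hg : ContinuousOn g (Icc 0 T))
    (hQ : ContinuousOn Q (Icc 0 T)) (hR : ContinuousOn R (Icc 0 T))
    (hΓ : ContinuousOn Γ (Icc 0 T)) (hη : ContinuousOn η (Icc 0 T))
    (H Γ₀ η₀ : ℝ) (ε : ℝ) (hε : 0 < ε) (M : ℝ) (hM : 0 ≤ M) (c₀ : ℝ) (hc₀ : 0 ≤ c₀)
    (P K φ : ℝ → ℝ)
    (hPdiff : ∀ t ∈ Icc (0 : ℝ) T, DifferentiableAt ℝ P t)
    (hKdiff : ∀ t ∈ Icc (0 : ℝ) T, DifferentiableAt ℝ K t)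
    (hPbd : ∀ t ∈ Icc (0 : ℝ) T, |P t| ≤ M)
    (hKbd : ∀ t ∈ Icc (0 : ℝ) T, |K t| ≤ M)
    (hφbd : ∀ t ∈ Icc (0 : ℝ) T, |φ t| ≤ M)
    (hαbd : ∀ t ∈ Icc (0 : ℝ) T, ε ≤ |R t + P t * D t ^ 2|)
    (hφT : φ T = -H * η₀)
    (hφode : ∀ t ∈ Icc (0 : ℝ) T,
      HasDerivAt φ
        (-(f t * P t + f t * K t + A t * φ t + C t * P t * g t
          - K t * B t * (R t + P t * D t ^ 2)⁻¹
              * (B t * φ t + P t * g t * D t)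
          - (B t * P t + P t * C t * D t) * (R t + P t * D t ^ 2)⁻¹
              * (B t * φ t + P t * g t * D t)
          - Q t * η t)) t) :
    ∃ c : ℝ, 0 ≤ c ∧
      ∀ N : ℕ, 1 ≤ N → ∀ PN KN φN : ℝ → ℝ,
        (∀ t ∈ Icc (0 : ℝ) T, DifferentiableAt ℝ PN t) →
        (∀ t ∈ Icc (0 : ℝ) T, DifferentiableAt ℝ KN t) →
        (∀ t ∈ Icc (0 : ℝ) T, |PN t| ≤ M) →
        (∀ t ∈ Icc (0 : ℝ) T, |KN t| ≤ M) →
        (∀ t ∈ Icc (0 : ℝ) T, |φN t| ≤ M) →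
        (∀ t ∈ Icc (0 : ℝ) T, ε ≤ |R t + (PN t + KN t / (N : ℝ)) * D t ^ 2|) →
        φN T = -H * (1 - Γ₀ / (N : ℝ)) * η₀ →
        (∀ t ∈ Icc (0 : ℝ) T, |PN t - P t| ≤ c₀ / N) →
        (∀ t ∈ Icc (0 : ℝ) T, |KN t - K t| ≤ c₀ / N) →
        (∀ t ∈ Icc (0 : ℝ) T,
          HasDerivAt φN
            (-(f t * PN t + f t * KN t + A t * φN t
              - PN t * B t * (R t + (PN t + KN t / (N : ℝ)) * D t ^ 2)⁻¹
                  * (B t * φN t + (PN t + KN t / (N : ℝ)) * g t * D t)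
              - KN t * B t * (R t + (PN t + KN t / (N : ℝ)) * D t ^ 2)⁻¹
                  * (B t * φN t + (PN t + KN t / (N : ℝ)) * g t * D t)
              + C t * (PN t + KN t / (N : ℝ))
                  * (g t - D t * (R t + (PN t + KN t / (N : ℝ)) * D t ^ 2)⁻¹
                      * (B t * φN t + (PN t + KN t / (N : ℝ)) * g t * D t))
              - (1 - Γ t / (N : ℝ)) * Q t * η t)) t) →
        ∀ t ∈ Icc (0 : ℝ) T, |φN t - φ t| ≤ c / N := by
  -- a uniform bound `Mb ≥ 1` for all coefficient functions on `[0,T]`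
  have hScont : ContinuousOn
      (fun t => |A t| + |B t| + |C t| + |D t| + |f t| + |g t| + |Q t| + |Γ t| + |η t|)
      (Icc 0 T) :=
    ((((((((hA.abs.add hB.abs).add hC.abs).add hD.abs).add hf.abs).add hg.abs).add
      hQ.abs).add hΓ.abs).add hη.abs)
  obtain ⟨C0, hC0⟩ := isCompact_Icc.exists_bound_of_continuousOn hScont
  set Mb : ℝ := max C0 1 with hMbdef
  have hMb1 : (1 : ℝ) ≤ Mb := le_max_right _ _
  have hMbpos : (0 : ℝ) < Mb := lt_of_lt_of_le one_pos hMb1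
  have hall : ∀ t ∈ Icc (0 : ℝ) T, |A t| ≤ Mb ∧ |B t| ≤ Mb ∧ |C t| ≤ Mb ∧ |D t| ≤ Mb ∧
      |f t| ≤ Mb ∧ |g t| ≤ Mb ∧ |Q t| ≤ Mb ∧ |Γ t| ≤ Mb ∧ |η t| ≤ Mb := by
    intro t ht
    have h := hC0 t ht
    rw [Real.norm_eq_abs] at h
    have h2 := le_abs_self
      (|A t| + |B t| + |C t| + |D t| + |f t| + |g t| + |Q t| + |Γ t| + |η t|)
    have hmax : C0 ≤ Mb := le_max_left _ _
    have n1 := abs_nonneg (A t); have n2 := abs_nonneg (B t); have n3 := abs_nonneg (C t)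
    have n4 := abs_nonneg (D t); have n5 := abs_nonneg (f t); have n6 := abs_nonneg (g t)
    have n7 := abs_nonneg (Q t); have n8 := abs_nonneg (Γ t); have n9 := abs_nonneg (η t)
    exact ⟨by linarith, by linarith, by linarith, by linarith, by linarith, by linarith,
      by linarith, by linarith, by linarith⟩
  -- the Grönwall constants
  set L : ℝ := Mb + 2 * (Mb * (M * Mb / ε)) + Mb * Mb * (M * Mb / ε) with hLdef
  set C₁ : ℝ := 2 * (Mb * c₀) + Mb * Mb * (c₀ + M) + Mb ^ 3
      + 2 * (Mb * (c₀ * (3 * M * Mb ^ 2) / ε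
          + M * (Mb ^ 2 * (c₀ + M)) * (3 * M * Mb ^ 2) / ε ^ 2
          + M * (Mb ^ 2 * (c₀ + M)) / ε))
      + Mb * Mb * ((c₀ + M) * (3 * M * Mb ^ 2) / ε
          + M * (Mb ^ 2 * (c₀ + M)) * (3 * M * Mb ^ 2) / ε ^ 2
          + M * (Mb ^ 2 * (c₀ + M)) / ε) with hC1def
  have hL0 : (0 : ℝ) < L := by
    rw [hLdef]; positivity
  have hC10 : (0 : ℝ) ≤ C₁ := by
    rw [hC1def]; positivity
  set δ₀ : ℝ := |H * Γ₀ * η₀| with hδ₀def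
  have hδ₀0 : (0 : ℝ) ≤ δ₀ := abs_nonneg _
  set c : ℝ := δ₀ * Real.exp (L * T) + C₁ / L * (Real.exp (L * T) - 1) with hcdef
  have hexpT1 : (1 : ℝ) ≤ Real.exp (L * T) := Real.one_le_exp (by positivity)
  have hc0 : (0 : ℝ) ≤ c := by
    rw [hcdef]
    have h1 : (0:ℝ) ≤ δ₀ * Real.exp (L * T) := by positivity
    have h2 : (0:ℝ) ≤ C₁ / L * (Real.exp (L * T) - 1) :=
      mul_nonneg (div_nonneg hC10 hL0.le) (by linarith)
    linarith
  refine ⟨c, hc0, ?_⟩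
  intro N hN PN KN φN hPNd hKNd hPNb hKNb hφNb hαNb hφNT hPNc hKNc hφNode t ht
  have hn1 : (1 : ℝ) ≤ (N : ℝ) := by exact_mod_cast hN
  have hn0 : (0 : ℝ) < (N : ℝ) := by linarith
  set ψ : ℝ → ℝ := fun s => φN (T - s) - φ (T - s) with hψdef
  set ψ' : ℝ → ℝ := fun s =>
    (f (T-s) * PN (T-s) + f (T-s) * KN (T-s) + A (T-s) * φN (T-s)
      - PN (T-s) * B (T-s) * (R (T-s) + (PN (T-s) + KN (T-s) / (N : ℝ)) * D (T-s) ^ 2)⁻¹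
          * (B (T-s) * φN (T-s) + (PN (T-s) + KN (T-s) / (N : ℝ)) * g (T-s) * D (T-s))
      - KN (T-s) * B (T-s) * (R (T-s) + (PN (T-s) + KN (T-s) / (N : ℝ)) * D (T-s) ^ 2)⁻¹
          * (B (T-s) * φN (T-s) + (PN (T-s) + KN (T-s) / (N : ℝ)) * g (T-s) * D (T-s))
      + C (T-s) * (PN (T-s) + KN (T-s) / (N : ℝ))
          * (g (T-s) - D (T-s) * (R (T-s) + (PN (T-s) + KN (T-s) / (N : ℝ)) * D (T-s) ^ 2)⁻¹
              * (B (T-s) * φN (T-s) + (PN (T-s) + KN (T-s) / (N : ℝ)) * g (T-s) * D (T-s)))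
      - (1 - Γ (T-s) / (N : ℝ)) * Q (T-s) * η (T-s))
    - (f (T-s) * P (T-s) + f (T-s) * K (T-s) + A (T-s) * φ (T-s) + C (T-s) * P (T-s) * g (T-s)
      - K (T-s) * B (T-s) * (R (T-s) + P (T-s) * D (T-s) ^ 2)⁻¹
          * (B (T-s) * φ (T-s) + P (T-s) * g (T-s) * D (T-s))
      - (B (T-s) * P (T-s) + P (T-s) * C (T-s) * D (T-s)) * (R (T-s) + P (T-s) * D (T-s) ^ 2)⁻¹
          * (B (T-s) * φ (T-s) + P (T-s) * g (T-s) * D (T-s))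
      - Q (T-s) * η (T-s)) with hψ'def
  have hψd : ∀ s ∈ Icc (0 : ℝ) T, HasDerivAt ψ (ψ' s) s := by
    intro s hs
    have hTs : T - s ∈ Icc (0 : ℝ) T := ⟨by linarith [hs.2], by linarith [hs.1]⟩
    have h1 : HasDerivAt (fun u : ℝ => T - u) (-1) s := (hasDerivAt_id s).const_sub T
    have h2 := (hφNode (T - s) hTs).comp s h1
    have h3 := (hφode (T - s) hTs).comp s h1
    have h4 := h2.sub h3
    simp only [Function.comp_def] at h4
    have : ψ = fun x => φN (T - x) - φ (T - x) := hψdef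
    rw [this]
    refine h4.congr_deriv ?_
    rw [hψ'def]
    ring
  have hψcont : ContinuousOn ψ (Icc 0 T) :=
    fun s hs => ((hψd s hs).continuousAt).continuousWithinAt
  have ha0 : ‖ψ 0‖ ≤ δ₀ / (N : ℝ) := by
    rw [hψdef]
    simp only [sub_zero]
    rw [Real.norm_eq_abs, hφNT, hφT]
    have hrw : -H * (1 - Γ₀ / (N : ℝ)) * η₀ - -H * η₀ = H * Γ₀ * η₀ / (N : ℝ) := by
      field_simp; ring
    rw [hrw, abs_div, abs_of_pos hn0, hδ₀def]
  have hbound : ∀ s ∈ Ico (0 : ℝ) T, ‖ψ' s‖ ≤ L * ‖ψ s‖ + C₁ / (N : ℝ) := by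
    intro s hs
    have hTs : T - s ∈ Icc (0 : ℝ) T := ⟨by linarith [hs.2], by linarith [hs.1]⟩
    rw [Real.norm_eq_abs, Real.norm_eq_abs, hψ'def, hψdef, hLdef, hC1def]
    obtain ⟨hA', hB', hC', hD', hf', hg', hQ', hΓ', hη'⟩ := hall (T - s) hTs
    exact key_est_s16 Mb M ε c₀ (N : ℝ) hMb1 hM hε hc₀ hn1
      (A (T-s)) (B (T-s)) (C (T-s)) (D (T-s)) (f (T-s)) (g (T-s)) (Q (T-s)) (R (T-s))
      (Γ (T-s)) (η (T-s)) (P (T-s)) (K (T-s)) (φ (T-s)) (PN (T-s)) (KN (T-s)) (φN (T-s))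
      hA' hB' hC' hD' hf' hg' hQ' hΓ' hη'
      (hPbd _ hTs) (hKbd _ hTs) (hφbd _ hTs) (hPNb _ hTs) (hKNb _ hTs) (hφNb _ hTs)
      (hαbd _ hTs) (hαNb _ hTs) (hPNc _ hTs) (hKNc _ hTs)
  have hgron := norm_le_gronwallBound_of_norm_deriv_right_le hψcont
    (fun s hs => (hψd s (Ico_subset_Icc_self hs)).hasDerivWithinAt) ha0 hbound
  have hs' : T - t ∈ Icc (0 : ℝ) T := ⟨by linarith [ht.2], by linarith [ht.1]⟩
  have h := hgron (T - t) hs'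
  rw [Real.norm_eq_abs] at h
  have hψt : ψ (T - t) = φN t - φ t := by rw [hψdef]; simp
  rw [hψt] at h
  refine h.trans ?_
  simp only [gronwallBound_of_K_ne_0 (ne_of_gt hL0)]
  have hTt0 : (0 : ℝ) ≤ T - t - 0 := by simp; linarith [ht.2]
  have hTtT : T - t - 0 ≤ T := by linarith [ht.1]
  have he1 : (1 : ℝ) ≤ Real.exp (L * (T - t - 0)) :=
    Real.one_le_exp (mul_nonneg hL0.le hTt0)
  have he2 : Real.exp (L * (T - t - 0)) ≤ Real.exp (L * T) :=
    Real.exp_le_exp.2 (mul_le_mul_of_nonneg_left hTtT hL0.le)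
  have hrw : δ₀ / (N : ℝ) * Real.exp (L * (T - t - 0))
      + C₁ / (N : ℝ) / L * (Real.exp (L * (T - t - 0)) - 1)
      = (δ₀ * Real.exp (L * (T - t - 0)) + C₁ / L * (Real.exp (L * (T - t - 0)) - 1))
          / (N : ℝ) := by ring
  rw [hrw, hcdef]
  have hnum : δ₀ * Real.exp (L * (T - t - 0)) + C₁ / L * (Real.exp (L * (T - t - 0)) - 1)
      ≤ δ₀ * Real.exp (L * T) + C₁ / L * (Real.exp (L * T) - 1) := by
    have hCL : (0 : ℝ) ≤ C₁ / L := div_nonneg hC10 hL0.le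
    have := mul_le_mul_of_nonneg_left he2 hδ₀0
    have := mul_le_mul_of_nonneg_left (sub_le_sub_right he2 1) hCL
    linarith
  exact (div_le_div_iff_of_pos_right hn0).2 hnum
end
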